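/- arXiv:0908.0637 — 6 statements merged into one kernel-verified Lean document; each statement's English description precedes it below -/
import Mathlib

section
/- Let H be a Hilbert space, L a closed subspace, and S a linear contraction of H (i.e. ‖Sx‖ ≤ ‖x‖ for all x) such that S(L) ⊆ L and the union of the preimages S⁻ⁿ(L) over n ≥ 0 is dense in H. If the restriction of S to L has a unique fixed point φ ∈ L, then φ is the unique fixed point of S in H. -/
open Filter Topology

/-- If `S` is a linear contraction of a Hilbert space `H`, `L` a closed subspace with
`S(L) ⊆ L` whose preimages `S⁻ⁿ(L)` have dense union, and the restriction of `S` to `L`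
has a unique fixed point `φ ∈ L`, then `φ` is the unique fixed point of `S` in `H`. -/
theorem stmt0 {𝕜 : Type*} [RCLike 𝕜] {H : Type*} [NormedAddCommGroup H]
    [InnerProductSpace 𝕜 H] [CompleteSpace H]
    (L : Submodule 𝕜 H) (hLclosed : IsClosed (L : Set H))
    (S : H →L[𝕜] H) (hS : ∀ x : H, ‖S x‖ ≤ ‖x‖)
    (hSL : ∀ x ∈ L, S x ∈ L)
    (hdense : Dense (⋃ n : ℕ, (⇑(S ^ n)) ⁻¹' (L : Set H)))
    (φ : H) (hφL : φ ∈ L) (hφ : S φ = φ)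
    (huniq : ∀ x ∈ L, S x = x → x = φ) :
    ∀ x : H, S x = x → x = φ := by
  intro x hx
  have hpow : ∀ (n : ℕ) (z : H), ‖(S ^ n) z‖ ≤ ‖z‖ := by
    intro n
    induction n with
    | zero => intro z; simp
    | succ k ih =>
      intro z
      have : (S ^ (k + 1)) z = (S ^ k) (S z) := by
        rw [pow_succ]; rfl
      rw [this]
      exact (ih (S z)).trans (hS z)
  have hfix : ∀ n : ℕ, (S ^ n) x = x := by
    intro n
    induction n with
    | zero => simp
    | succ k ih =>
      have : (S ^ (k + 1)) x = (S ^ k) (S x) := by rw [pow_succ]; rfl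
      rw [this, hx, ih]
  have hxL : x ∈ L := by
    have hxc : x ∈ closure (⋃ n : ℕ, (⇑(S ^ n)) ⁻¹' (L : Set H)) := hdense x
    rw [Metric.mem_closure_iff] at hxc
    have : x ∈ closure (L : Set H) := by
      rw [Metric.mem_closure_iff]
      intro ε hε
      obtain ⟨y, hy, hd⟩ := hxc ε hε
      obtain ⟨n, hn⟩ : ∃ n : ℕ, (S ^ n) y ∈ L := by
        simpa using hy
      refine ⟨(S ^ n) y, hn, ?_⟩
      have : x - (S ^ n) y = (S ^ n) (x - y) := by
        rw [map_sub, hfix n]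
      calc dist x ((S ^ n) y) = ‖x - (S ^ n) y‖ := by rw [dist_eq_norm]
        _ = ‖(S ^ n) (x - y)‖ := by rw [this]
        _ ≤ ‖x - y‖ := hpow n _
        _ = dist x y := (dist_eq_norm x y).symm
        _ < ε := hd
    rwa [hLclosed.closure_eq] at this
  exact huniq x hxL hx
end

section
/- Let H be a Hilbert space, L a closed subspace, S a linear contraction of H, and f ∈ H a fixed point of S (Sf = f). If fₙ denotes the orthogonal projection of f onto the closed subspace S⁻ⁿ(L) (assumed closed), then S fₙ = fₙ for every n. -/
open Filter Topology

/-- If `S` is a linear contraction of a Hilbert space `H` mapping a closed subspace `L`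
into itself, `f` is a fixed point of `S`, and `fₙ` is the orthogonal projection of `f`
onto the closed subspace `S⁻ⁿ(L)` (characterized as the nearest point of `S⁻ⁿ(L)` to `f`),
then `S fₙ = fₙ` for every `n`. -/
theorem stmt1 {𝕜 : Type*} [RCLike 𝕜] {H : Type*} [NormedAddCommGroup H]
    [InnerProductSpace 𝕜 H] [CompleteSpace H]
    (L : Submodule 𝕜 H) (hLclosed : IsClosed (L : Set H))
    (S : H →L[𝕜] H) (hS : ∀ x : H, ‖S x‖ ≤ ‖x‖)
    (hSL : ∀ x ∈ L, S x ∈ L)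
    (f : H) (hf : S f = f)
    (fn : ℕ → H)
    (hclosed : ∀ n : ℕ, IsClosed ((⇑(S ^ n)) ⁻¹' (L : Set H)))
    (hmem : ∀ n : ℕ, (S ^ n) (fn n) ∈ L)
    (hmin : ∀ n : ℕ, ∀ y : H, (S ^ n) y ∈ L → ‖f - fn n‖ ≤ ‖f - y‖) :
    ∀ n : ℕ, S (fn n) = fn n := by
  intro n
  -- the preimage submodule
  set K : Submodule 𝕜 H := L.comap ((S ^ n) : H →L[𝕜] H).toLinearMap with hK
  have hKmem : ∀ x : H, x ∈ K ↔ (S ^ n) x ∈ L := fun x => Iff.rfl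
  have hfnK : fn n ∈ K := (hKmem _).2 (hmem n)
  have hSfnK : S (fn n) ∈ K := by
    rw [hKmem]
    have : (S ^ n) (S (fn n)) = S ((S ^ n) (fn n)) := by
      have := pow_succ S n
      have := pow_succ' S n
      calc (S ^ n) (S (fn n)) = ((S ^ n) * S) (fn n) := rfl
        _ = (S * S ^ n) (fn n) := by rw [← pow_succ, ← pow_succ']
        _ = S ((S ^ n) (fn n)) := rfl
    rw [this]
    exact hSL _ (hmem n)
  -- equality of distances
  have hle : ‖f - S (fn n)‖ ≤ ‖f - fn n‖ := by
    calc ‖f - S (fn n)‖ = ‖S (f - fn n)‖ := by rw [map_sub, hf]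
      _ ≤ ‖f - fn n‖ := hS _
  have heq : ‖f - S (fn n)‖ = ‖f - fn n‖ :=
    le_antisymm hle (hmin n _ ((hKmem _).1 hSfnK))
  -- K is complete
  haveI : CompleteSpace K := (hclosed n).completeSpace_coe
  -- fn n attains the infimum
  have hinf : ‖f - fn n‖ = ⨅ w : K, ‖f - w‖ := by
    refine le_antisymm (le_ciInf fun w => hmin n _ ((hKmem _).1 w.2)) ?_
    exact ciInf_le ⟨0, fun x ⟨w, hw⟩ => hw ▸ norm_nonneg _⟩ (⟨fn n, hfnK⟩ : K)
  have hinf' : ‖f - S (fn n)‖ = ⨅ w : K, ‖f - w‖ := heq.trans hinf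
  have h1 := (Submodule.norm_eq_iInf_iff_inner_eq_zero K hfnK).1 hinf
  have h2 := (Submodule.norm_eq_iInf_iff_inner_eq_zero K hSfnK).1 hinf'
  have hd : S (fn n) - fn n ∈ K := K.sub_mem hSfnK hfnK
  have : (inner 𝕜 (S (fn n) - fn n) (S (fn n) - fn n) : 𝕜) = 0 := by
    have e1 := h1 _ hd
    have e2 := h2 _ hd
    have : (inner 𝕜 ((f - fn n) - (f - S (fn n))) (S (fn n) - fn n) : 𝕜) = 0 := by
      rw [inner_sub_left, e1, e2, sub_zero]
    simpa [sub_sub_sub_cancel_left] using this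
  exact sub_eq_zero.1 (inner_self_eq_zero.1 this)
end

section
/- Let G be a locally compact group in which every closed subgroup is unimodular. Then for every g ∈ G such that the contraction subgroup C_g is closed, C_g is trivial: C_g = {e}. -/
open Filter Topology MeasureTheory

set_option linter.unusedSectionVars false
set_option maxHeartbeats 1000000

open Set Pointwise
open scoped ENNReal NNReal

/-- The contraction subgroup of `g` in `G`: all `x` with `gⁿ x g⁻ⁿ → e`. -/
def contrSet {G : Type*} [Group G] [TopologicalSpace G] (g : G) : Set G :=
  {x : G | Tendsto (fun n : ℕ => g ^ n * x * (g ^ n)⁻¹) atTop (nhds 1)}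

section Basic

variable {G : Type*} [Group G] [TopologicalSpace G] [IsTopologicalGroup G] {g x y : G}

lemma mem_contrSet_iff :
    x ∈ contrSet g ↔ Tendsto (fun n : ℕ => g ^ n * x * (g ^ n)⁻¹) atTop (𝓝 1) := Iff.rfl

lemma one_mem_contrSet (g : G) : (1 : G) ∈ contrSet g := by
  rw [mem_contrSet_iff]
  have h : (fun n : ℕ => g ^ n * 1 * (g ^ n)⁻¹) = fun _ => (1 : G) := by
    funext n; group
  rw [h]; exact tendsto_const_nhds

lemma mul_mem_contrSet (hx : x ∈ contrSet g) (hy : y ∈ contrSet g) :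
    x * y ∈ contrSet g := by
  rw [mem_contrSet_iff]
  have h : (fun n : ℕ => g ^ n * (x * y) * (g ^ n)⁻¹)
      = fun n : ℕ => (g ^ n * x * (g ^ n)⁻¹) * (g ^ n * y * (g ^ n)⁻¹) := by
    funext n; group
  rw [h]
  simpa using hx.mul hy

lemma inv_mem_contrSet (hx : x ∈ contrSet g) : x⁻¹ ∈ contrSet g := by
  rw [mem_contrSet_iff]
  have h : (fun n : ℕ => g ^ n * x⁻¹ * (g ^ n)⁻¹)
      = fun n : ℕ => (g ^ n * x * (g ^ n)⁻¹)⁻¹ := by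
    funext n; group
  rw [h]
  simpa using hx.inv

/-- The contraction set as a subgroup. -/
def contrSubgroup (g : G) : Subgroup G where
  carrier := contrSet g
  one_mem' := one_mem_contrSet g
  mul_mem' := mul_mem_contrSet
  inv_mem' := inv_mem_contrSet

lemma conj_conj_pow {G : Type*} [Group G] (g y : G) (a b : ℕ) :
    g ^ a * (g ^ b * y * (g ^ b)⁻¹) * (g ^ a)⁻¹ = g ^ (a + b) * y * (g ^ (a + b))⁻¹ := by
  rw [pow_add]; group

lemma conj_mem_contrSet (hx : x ∈ contrSet g) : g * x * g⁻¹ ∈ contrSet g := by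
  rw [mem_contrSet_iff]
  have h : (fun n : ℕ => g ^ n * (g * x * g⁻¹) * (g ^ n)⁻¹)
      = (fun n : ℕ => g ^ n * x * (g ^ n)⁻¹) ∘ (fun n => n + 1) := by
    funext n
    show g ^ n * (g * x * g⁻¹) * (g ^ n)⁻¹ = g ^ (n + 1) * x * (g ^ (n + 1))⁻¹
    rw [pow_succ]; group
  rw [h]
  exact hx.comp (tendsto_add_atTop_nat 1)

lemma conj_inv_mem_contrSet (hx : x ∈ contrSet g) : g⁻¹ * x * g ∈ contrSet g := by
  rw [mem_contrSet_iff]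
  have h : ∀ᶠ n in atTop, g ^ n * (g⁻¹ * x * g) * (g ^ n)⁻¹
      = ((fun n : ℕ => g ^ n * x * (g ^ n)⁻¹) ∘ (fun n => n - 1)) n := by
    filter_upwards [eventually_ge_atTop 1] with n hn
    show g ^ n * (g⁻¹ * x * g) * (g ^ n)⁻¹ = g ^ (n - 1) * x * (g ^ (n - 1))⁻¹
    have : g ^ n = g ^ (n - 1) * g := by
      rw [← pow_succ, Nat.sub_add_cancel hn]
    rw [this]; group
  exact Tendsto.congr' (EventuallyEq.symm h) (hx.comp (tendsto_sub_atTop_nat 1))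

lemma conj_zpow_mem_contrSet : ∀ k : ℤ, ∀ x ∈ contrSet g,
    g ^ k * x * (g ^ k)⁻¹ ∈ contrSet g := by
  intro k
  induction k using Int.induction_on with
  | zero => intro x hx; simpa using hx
  | succ k ih =>
    intro x hx
    have h : g ^ ((k : ℤ) + 1) * x * (g ^ ((k : ℤ) + 1))⁻¹
        = g ^ (k : ℤ) * (g * x * g⁻¹) * (g ^ (k : ℤ))⁻¹ := by
      rw [zpow_add_one]; group
    rw [h]
    exact ih _ (conj_mem_contrSet hx)
  | pred k ih =>
    intro x hx
    have h : g ^ (-(k : ℤ) - 1) * x * (g ^ (-(k : ℤ) - 1))⁻¹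
        = g ^ (-(k : ℤ)) * (g⁻¹ * x * g) * (g ^ (-(k : ℤ)))⁻¹ := by
      rw [zpow_sub_one]; group
    rw [h]
    exact ih _ (conj_inv_mem_contrSet hx)

lemma conj_pow_mem_contrSet (n : ℕ) (hx : x ∈ contrSet g) :
    g ^ n * x * (g ^ n)⁻¹ ∈ contrSet g := by
  have := conj_zpow_mem_contrSet (g := g) n x hx
  simpa using this

lemma conj_pow_inv_mem_contrSet (n : ℕ) (hx : x ∈ contrSet g) :
    (g ^ n)⁻¹ * x * g ^ n ∈ contrSet g := by
  have := conj_zpow_mem_contrSet (g := g) (-(n:ℤ)) x hx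
  simpa [zpow_neg] using this

end Basic

section Degenerate

variable {G : Type*} [Group G] [TopologicalSpace G] [IsTopologicalGroup G] [T2Space G] {g x : G}

lemma contrSet_eq_one_of_isolated
    (h : ∃ U ∈ 𝓝 (1 : G), U ∩ contrSet g ⊆ {1}) : contrSet g = {1} := by
  obtain ⟨U, hU, hU1⟩ := h
  apply Set.eq_singleton_iff_unique_mem.2
  refine ⟨one_mem_contrSet g, ?_⟩
  intro x hx
  have hev : ∀ᶠ n : ℕ in atTop, g ^ n * x * (g ^ n)⁻¹ ∈ U := hx hU
  obtain ⟨n, hn⟩ := hev.exists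
  have hmem : g ^ n * x * (g ^ n)⁻¹ ∈ contrSet g := conj_pow_mem_contrSet n hx
  have h1 : g ^ n * x * (g ^ n)⁻¹ ∈ ({1} : Set G) := hU1 ⟨hn, hmem⟩
  have h2 : g ^ n * x * (g ^ n)⁻¹ = 1 := h1
  have h3 := congrArg (fun z => (g ^ n)⁻¹ * z * g ^ n) h2
  simpa [mul_assoc] using h3

lemma contrSet_eq_one_of_pow_mem
    (h : ∃ n : ℕ, 0 < n ∧ g ^ n ∈ contrSet g) : contrSet g = {1} := by
  obtain ⟨n, hn, hg⟩ := h
  have hconst : (fun k : ℕ => g ^ k * g ^ n * (g ^ k)⁻¹) = fun _ => g ^ n := by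
    funext k
    have : g ^ k * g ^ n = g ^ n * g ^ k := (Commute.pow_pow_self g k n)
    rw [this]; group
  have hgn : g ^ n = (1 : G) := by
    have ht : Tendsto (fun k : ℕ => g ^ k * g ^ n * (g ^ k)⁻¹) atTop (𝓝 1) := hg
    rw [hconst] at ht
    exact tendsto_nhds_unique tendsto_const_nhds ht
  apply Set.eq_singleton_iff_unique_mem.2
  refine ⟨one_mem_contrSet g, ?_⟩
  intro x hx
  have hsub : Tendsto (fun k : ℕ => n * k) atTop atTop := by
    apply tendsto_atTop_mono (f := id)
    · intro k; simpa using Nat.le_mul_of_pos_left k hn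
    · exact tendsto_id
  have ht : Tendsto ((fun m : ℕ => g ^ m * x * (g ^ m)⁻¹) ∘ (fun k => n * k))
      atTop (𝓝 1) := hx.comp hsub
  have hcst : ((fun m : ℕ => g ^ m * x * (g ^ m)⁻¹) ∘ (fun k => n * k)) = fun _ => x := by
    funext k
    show g ^ (n * k) * x * (g ^ (n * k))⁻¹ = x
    rw [pow_mul, hgn, one_pow]
    group
  rw [hcst] at ht
  exact tendsto_nhds_unique tendsto_const_nhds ht

end Degenerate

section Unif

variable {G : Type*} [Group G] [TopologicalSpace G] [IsTopologicalGroup G] [T2Space G]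
  [LocallyCompactSpace G] {g : G}

/-- Uniform contraction on compact subsets of a closed contraction set. -/
lemma exists_pow_conj_subset (hC : IsClosed (contrSet g)) {K U : Set G}
    (hK : IsCompact K) (hKC : K ⊆ contrSet g) (hU : U ∈ 𝓝 (1 : G)) :
    ∃ N : ℕ, ∀ x ∈ K, g ^ N * x * (g ^ N)⁻¹ ∈ U := by
  classical
  set C := contrSet g with hCdef
  obtain ⟨V, hVopen, hV1, hVU⟩ := exists_open_nhds_one_mul_subset hU
  have hVinv : V⁻¹ ∈ 𝓝 (1 : G) := by
    have : ContinuousAt (fun w : G => w⁻¹) 1 := continuous_inv.continuousAt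
    have h := this.preimage_mem_nhds (by simpa using hVopen.mem_nhds hV1)
    have he : (fun w : G => w⁻¹) ⁻¹' V = V⁻¹ := rfl
    rwa [he] at h
  have hV' : V ∩ V⁻¹ ∈ 𝓝 (1 : G) := inter_mem (hVopen.mem_nhds hV1) hVinv
  obtain ⟨B, hBnhds, hBV', hBcomp⟩ := LocallyCompactSpace.local_compact_nhds (1 : G) _ hV'
  have hBclosed : IsClosed B := hBcomp.isClosed
  haveI : LocallyCompactSpace C := hC.locallyCompactSpace
  haveI : Nonempty C := ⟨⟨1, one_mem_contrSet g⟩⟩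
  set F : ℕ → Set C := fun N => {z : C | ∀ m, N ≤ m → g ^ m * (z : G) * (g ^ m)⁻¹ ∈ B}
    with hFdef
  have hFclosed : ∀ N, IsClosed (F N) := by
    intro N
    have : F N = ⋂ m, ⋂ (_ : N ≤ m),
        (fun z : C => g ^ m * (z : G) * (g ^ m)⁻¹) ⁻¹' B := by
      ext z; simp [hFdef]
    rw [this]
    exact isClosed_iInter fun m => isClosed_iInter fun _ =>
      hBclosed.preimage ((continuous_const.mul continuous_subtype_val).mul continuous_const)
  have hFcover : ⋃ N, F N = univ := by
    ext z
    simp only [mem_iUnion, mem_univ, iff_true]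
    have hz : Tendsto (fun n : ℕ => g ^ n * (z : G) * (g ^ n)⁻¹) atTop (𝓝 1) := z.2
    have hev : ∀ᶠ n : ℕ in atTop, g ^ n * (z : G) * (g ^ n)⁻¹ ∈ B := hz hBnhds
    rw [eventually_atTop] at hev
    obtain ⟨N, hN⟩ := hev
    exact ⟨N, hN⟩
  obtain ⟨N₀, hN₀⟩ := nonempty_interior_of_iUnion_of_closed hFclosed hFcover
  obtain ⟨z₀, hz₀⟩ := hN₀
  set x₀ : G := (z₀ : G) with hx₀def
  have hx₀C : x₀ ∈ C := z₀.2
  have hz₀F : z₀ ∈ F N₀ := interior_subset hz₀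
  have hmem : F N₀ ∈ 𝓝 z₀ := mem_interior_iff_mem_nhds.1 hz₀
  rw [nhds_subtype_eq_comap, mem_comap] at hmem
  obtain ⟨O', hO'nhds, hO'sub⟩ := hmem
  have hstar : ∀ z ∈ C, x₀ * z ∈ O' → ∀ j, N₀ ≤ j → g ^ j * z * (g ^ j)⁻¹ ∈ U := by
    intro z hz hzO j hj
    have hy : x₀ * z ∈ C := mul_mem_contrSet hx₀C hz
    have hyF : (⟨x₀ * z, hy⟩ : C) ∈ F N₀ := hO'sub hzO
    have h1 : g ^ j * (x₀ * z) * (g ^ j)⁻¹ ∈ B := hyF j hj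
    have h2 : g ^ j * x₀ * (g ^ j)⁻¹ ∈ B := hz₀F j hj
    have hid : g ^ j * z * (g ^ j)⁻¹
        = (g ^ j * x₀ * (g ^ j)⁻¹)⁻¹ * (g ^ j * (x₀ * z) * (g ^ j)⁻¹) := by group
    rw [hid]
    have hb1 : (g ^ j * x₀ * (g ^ j)⁻¹)⁻¹ ∈ V := (hBV' h2).2
    have hb2 : g ^ j * (x₀ * z) * (g ^ j)⁻¹ ∈ V := (hBV' h1).1
    exact hVU (mul_mem_mul hb1 hb2)
  set P : Set G := (fun w => x₀ * w) ⁻¹' O' with hPdef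
  have hP : P ∈ 𝓝 (1 : G) := by
    have hc : ContinuousAt (fun w : G => x₀ * w) 1 :=
      (continuous_const.mul continuous_id).continuousAt
    exact hc.preimage_mem_nhds (by simpa using hO'nhds)
  have hintP : interior P ∈ 𝓝 (1 : G) := interior_mem_nhds.2 hP
  have hsel : ∀ x ∈ K, ∃ mm : ℕ, g ^ mm * x * (g ^ mm)⁻¹ ∈ interior P := by
    intro x hx
    have hz : Tendsto (fun n : ℕ => g ^ n * x * (g ^ n)⁻¹) atTop (𝓝 1) := hKC hx
    exact (hz.eventually_mem hintP).exists
  choose! m hm using hsel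
  have hcov : ∀ x (hx : x ∈ K),
      (fun y => g ^ (m x) * y * (g ^ (m x))⁻¹) ⁻¹' (interior P) ∈ 𝓝 x := by
    intro x hx
    apply ContinuousAt.preimage_mem_nhds
    · exact ((continuous_const.mul continuous_id).mul continuous_const).continuousAt
    · exact isOpen_interior.mem_nhds (hm x hx)
  obtain ⟨t, htcov⟩ := hK.elim_nhds_subcover'
    (fun x hx => (fun y => g ^ (m x) * y * (g ^ (m x))⁻¹) ⁻¹' (interior P)) hcov
  set M := t.sup (fun x => m (x : G)) with hMdef
  refine ⟨N₀ + M, ?_⟩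
  intro y hy
  have hy' := htcov hy
  simp only [mem_iUnion] at hy'
  obtain ⟨xi, hxi, hyU⟩ := hy'
  set z := g ^ (m (xi : G)) * y * (g ^ (m (xi : G)))⁻¹ with hzdef
  have hzC : z ∈ C := conj_pow_mem_contrSet _ (hKC hy)
  have hzP : z ∈ P := interior_subset hyU
  have hzO : x₀ * z ∈ O' := hzP
  have hjle : m (xi : G) ≤ M := by
    rw [hMdef]; exact Finset.le_sup (f := fun x : ↥K => m (x : G)) hxi
  have hstar' := hstar z hzC hzO (N₀ + M - m (xi : G)) (by omega)
  have harith : (N₀ + M - m (xi : G)) + m (xi : G) = N₀ + M := by omega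
  have hid2 : g ^ (N₀ + M) * y * (g ^ (N₀ + M))⁻¹
      = g ^ (N₀ + M - m (xi : G)) * z * (g ^ (N₀ + M - m (xi : G)))⁻¹ := by
    rw [hzdef, conj_conj_pow, harith]
  rw [hid2]
  exact hstar'

end Unif

section Meas

variable {G : Type*} [Group G] [TopologicalSpace G] [IsTopologicalGroup G] [T2Space G]
  [MeasurableSpace G] [BorelSpace G]

/-- The "trace" on `G` of a measure defined on a subgroup of `G`. -/
noncomputable def mres {Γ : Subgroup G} (μ : Measure ↥Γ) (A : Set G) : ℝ≥0∞ :=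
  μ ((Subtype.val : ↥Γ → G) ⁻¹' A)

variable {Γ : Subgroup G} (μ : Measure ↥Γ)

lemma mres_mono {A B : Set G} (h : A ⊆ B) : mres μ A ≤ mres μ B :=
  measure_mono (preimage_mono h)

lemma isCompact_val_preimage (hΓ : IsClosed (Γ : Set G)) {A : Set G} (hA : IsCompact A) :
    IsCompact ((Subtype.val : ↥Γ → G) ⁻¹' A) := by
  have h1 : (Subtype.val : ↥Γ → G) ⁻¹' A
      = (Subtype.val : ↥Γ → G) ⁻¹' (A ∩ (Γ : Set G)) := by
    ext z
    simp only [mem_preimage, mem_inter_iff, iff_self_and]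
    exact fun _ => z.2
  rw [h1]
  have hemb : Topology.IsClosedEmbedding (Subtype.val : ↥Γ → G) :=
    Topology.IsClosedEmbedding.subtypeVal hΓ
  exact hemb.isCompact_preimage (hA.inter_right hΓ)

lemma mres_lt_top (hΓ : IsClosed (Γ : Set G)) [IsFiniteMeasureOnCompacts μ] {A : Set G}
    (hA : IsCompact A) : mres μ A < ∞ :=
  (isCompact_val_preimage hΓ hA).measure_lt_top

lemma mres_pos_of_nhds [μ.IsOpenPosMeasure] {U : Set G} (hU : U ∈ 𝓝 (1 : G)) :
    0 < mres μ U := by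
  have h1 : (1 : G) ∈ interior U := mem_interior_iff_mem_nhds.2 hU
  have hop : IsOpen ((Subtype.val : ↥Γ → G) ⁻¹' interior U) :=
    isOpen_interior.preimage continuous_subtype_val
  have hne : ((Subtype.val : ↥Γ → G) ⁻¹' interior U).Nonempty :=
    ⟨1, by simpa using h1⟩
  calc (0 : ℝ≥0∞) < μ ((Subtype.val : ↥Γ → G) ⁻¹' interior U) := hop.measure_pos μ hne
    _ ≤ mres μ U := measure_mono (preimage_mono interior_subset)

lemma mres_smul_left [μ.IsMulLeftInvariant] {s : G} (hs : s ∈ Γ) (A : Set G) :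
    mres μ ((fun x => s * x) '' A) = mres μ A := by
  haveI : BorelSpace ↥Γ := Subtype.borelSpace (Γ : Set G)
  have h1 : (Subtype.val : ↥Γ → G) ⁻¹' ((fun x => s * x) '' A)
      = (fun z : ↥Γ => (⟨s, hs⟩ : ↥Γ)⁻¹ * z) ⁻¹' ((Subtype.val : ↥Γ → G) ⁻¹' A) := by
    ext z
    simp only [mem_preimage, mem_image]
    constructor
    · rintro ⟨a, ha, hz⟩
      have : ((⟨s, hs⟩ : ↥Γ)⁻¹ * z : ↥Γ) = (⟨s, hs⟩ : ↥Γ)⁻¹ * z := rfl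
      show ((⟨s, hs⟩ : ↥Γ)⁻¹ * z : ↥Γ).val ∈ A
      have hc : ((⟨s, hs⟩ : ↥Γ)⁻¹ * z : ↥Γ).val = s⁻¹ * (z : G) := rfl
      rw [hc, ← hz]
      simpa [mul_assoc] using ha
    · intro h
      exact ⟨s⁻¹ * (z : G), h, by group⟩
  unfold mres
  rw [h1, measure_preimage_mul]

lemma mres_smul_right [μ.IsMulRightInvariant] {s : G} (hs : s ∈ Γ) (A : Set G) :
    mres μ ((fun x => x * s) '' A) = mres μ A := by
  haveI : BorelSpace ↥Γ := Subtype.borelSpace (Γ : Set G)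
  have h1 : (Subtype.val : ↥Γ → G) ⁻¹' ((fun x => x * s) '' A)
      = (fun z : ↥Γ => z * (⟨s, hs⟩ : ↥Γ)⁻¹) ⁻¹' ((Subtype.val : ↥Γ → G) ⁻¹' A) := by
    ext z
    simp only [mem_preimage, mem_image]
    constructor
    · rintro ⟨a, ha, hz⟩
      show ((z * (⟨s, hs⟩ : ↥Γ)⁻¹ : ↥Γ) : G) ∈ A
      have hc : ((z * (⟨s, hs⟩ : ↥Γ)⁻¹ : ↥Γ) : G) = (z : G) * s⁻¹ := rfl
      rw [hc, ← hz]
      simpa [mul_assoc] using ha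
    · intro h
      exact ⟨(z : G) * s⁻¹, h, by group⟩
  unfold mres
  rw [h1, measure_preimage_mul_right]

lemma mres_conj [μ.IsMulLeftInvariant] [μ.IsMulRightInvariant] {s : G} (hs : s ∈ Γ)
    (A : Set G) : mres μ ((fun x => s * x * s⁻¹) '' A) = mres μ A := by
  have himg : (fun x => s * x * s⁻¹) '' A = (fun x => s * x) '' ((fun x => x * s⁻¹) '' A) := by
    rw [Set.image_image]
    apply Set.image_congr'
    intro x; group
  rw [himg, mres_smul_left μ hs, mres_smul_right μ (inv_mem hs)]

end Meas


/-- In a locally compact group in which every closed subgroup is unimodular, every closed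
contraction subgroup `C_g` is trivial. -/
theorem stmt3 {G : Type*} [Group G] [TopologicalSpace G] [IsTopologicalGroup G]
    [LocallyCompactSpace G] [T2Space G] [MeasurableSpace G] [BorelSpace G]
    (hunim : ∀ H : Subgroup G, IsClosed (H : Set G) →
      ∀ ν : Measure ↥H, ν.IsHaarMeasure → ν.IsMulRightInvariant) :
    ∀ g : G, IsClosed (contrSet g) → contrSet g = {1} := by
  intro g hC
  by_cases htor : ∃ n : ℕ, 0 < n ∧ g ^ n ∈ contrSet g
  · exact contrSet_eq_one_of_pow_mem htor
  by_cases hisol : ∃ U ∈ 𝓝 (1 : G), U ∩ contrSet g ⊆ {1}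
  · exact contrSet_eq_one_of_isolated hisol
  exfalso
  push_neg at htor hisol
  -- hisol : ∀ U ∈ 𝓝 1, ¬ (U ∩ contrSet g ⊆ {1})
  have hisol' : ∀ U ∈ 𝓝 (1 : G), ∃ x, x ∈ U ∧ x ∈ contrSet g ∧ x ≠ 1 := by
    intro U hU
    obtain ⟨x, hx, hx1⟩ := Set.not_subset.1 (hisol U hU)
    exact ⟨x, hx.1, hx.2, by simpa using hx1⟩
  set C : Set G := contrSet g with hCdef
  set S : Subgroup G := contrSubgroup g with hSdef
  have hSc : IsClosed (S : Set G) := hC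
  haveI : BorelSpace ↥S := Subtype.borelSpace (S : Set G)
  haveI : LocallyCompactSpace ↥S := hSc.locallyCompactSpace
  haveI hSne : (𝓝[≠] (1 : ↥S)).NeBot := by
    rw [← mem_closure_iff_nhdsWithin_neBot]
    rw [mem_closure_iff_nhds]
    intro t ht
    have h1 : (1 : ↥S) = ⟨(1 : G), S.one_mem⟩ := rfl
    rw [h1, nhds_subtype_eq_comap] at ht
    obtain ⟨U, hU, hUsub⟩ := mem_comap.1 ht
    obtain ⟨x, hxU, hxC, hx1⟩ := hisol' U hU
    refine ⟨⟨x, hxC⟩, hUsub hxU, ?_⟩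
    simp only [mem_compl_iff, mem_singleton_iff]
    intro hcontra
    exact hx1 (congrArg Subtype.val hcontra)
  let μ : Measure ↥S := Measure.haar
  haveI hμh : μ.IsHaarMeasure := Measure.isHaarMeasure_haarMeasure _
  haveI hμreg : μ.Regular := Measure.regular_haarMeasure
  haveI hμright : μ.IsMulRightInvariant := hunim S hSc μ hμh
  -- the conjugation equivalences on S
  have hf₁mem : ∀ z : ↥S, g * (z : G) * g⁻¹ ∈ S := fun z => conj_mem_contrSet z.2
  have hf₂mem : ∀ z : ↥S, g⁻¹ * (z : G) * g ∈ S := fun z => conj_inv_mem_contrSet z.2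
  let f₁ : ↥S → ↥S := fun z => ⟨g * (z : G) * g⁻¹, hf₁mem z⟩
  let f₂ : ↥S → ↥S := fun z => ⟨g⁻¹ * (z : G) * g, hf₂mem z⟩
  have hcont₁ : Continuous f₁ :=
    Continuous.subtype_mk ((continuous_const.mul continuous_subtype_val).mul continuous_const) _
  have hcont₂ : Continuous f₂ :=
    Continuous.subtype_mk ((continuous_const.mul continuous_subtype_val).mul continuous_const) _
  have hlinv : Function.LeftInverse f₂ f₁ := by
    intro z; apply Subtype.ext; show g⁻¹ * (g * (z : G) * g⁻¹) * g = (z : G); group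
  have hrinv : Function.RightInverse f₂ f₁ := by
    intro z; apply Subtype.ext; show g * (g⁻¹ * (z : G) * g) * g⁻¹ = (z : G); group
  let ψ : ↥S ≃* ↥S :=
    { toFun := f₁, invFun := f₂, left_inv := hlinv, right_inv := hrinv,
      map_mul' := by
        intro a b; apply Subtype.ext
        show g * ((a : G) * (b : G)) * g⁻¹ = (g * (a : G) * g⁻¹) * (g * (b : G) * g⁻¹)
        group }
  let φ : ↥S ≃ₜ ↥S :=
    { toEquiv := ψ.toEquiv, continuous_toFun := hcont₁, continuous_invFun := hcont₂ }
  have hemb₁ : MeasurableEmbedding f₁ := φ.toMeasurableEquiv.measurableEmbedding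
  have hemb₂ : MeasurableEmbedding f₂ := φ.symm.toMeasurableEquiv.measurableEmbedding
  let μ₁ : Measure ↥S := Measure.map f₁ μ
  let μ₂ : Measure ↥S := Measure.map f₂ μ
  haveI hμ₁h : μ₁.IsHaarMeasure := ψ.isHaarMeasure_map μ hcont₁ hcont₂
  haveI hμ₂h : μ₂.IsHaarMeasure := ψ.symm.isHaarMeasure_map μ hcont₂ hcont₁
  let c₀ : ℝ≥0 := Measure.haarScalarFactor μ₂ μ
  let c₁ : ℝ≥0 := Measure.haarScalarFactor μ₁ μ
  -- single conjugation step scaling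
  have hstep : ∀ A : Set G, IsCompact A →
      mres μ ((fun x => g * x * g⁻¹) '' A) = (c₀ : ℝ≥0∞) * mres μ A ∧
      mres μ ((fun x => g⁻¹ * x * g) '' A) = (c₁ : ℝ≥0∞) * mres μ A := by
    intro A hA
    have hpre : IsCompact ((Subtype.val : ↥S → G) ⁻¹' A) := isCompact_val_preimage hSc hA
    have hclos : IsCompact (closure ((Subtype.val : ↥S → G) ⁻¹' A)) := by
      rw [hpre.isClosed.closure_eq]; exact hpre
    constructor
    · have h1 : (Subtype.val : ↥S → G) ⁻¹' ((fun x => g * x * g⁻¹) '' A)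
          = f₂ ⁻¹' ((Subtype.val : ↥S → G) ⁻¹' A) := by
        ext z
        simp only [mem_preimage, mem_image]
        constructor
        · rintro ⟨a, ha, hz⟩
          show g⁻¹ * (z : G) * g ∈ A
          rw [← hz]
          have : g⁻¹ * (g * a * g⁻¹) * g = a := by group
          rw [this]; exact ha
        · intro h
          exact ⟨g⁻¹ * (z : G) * g, h, by group⟩
      have h2 : mres μ ((fun x => g * x * g⁻¹) '' A)
          = μ₂ ((Subtype.val : ↥S → G) ⁻¹' A) := by
        rw [mres, h1, hemb₂.map_apply]
      rw [h2, Measure.measure_isMulInvariant_eq_smul_of_isCompact_closure μ₂ μ hclos,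
        ENNReal.smul_def]
      rfl
    · have h1 : (Subtype.val : ↥S → G) ⁻¹' ((fun x => g⁻¹ * x * g) '' A)
          = f₁ ⁻¹' ((Subtype.val : ↥S → G) ⁻¹' A) := by
        ext z
        simp only [mem_preimage, mem_image]
        constructor
        · rintro ⟨a, ha, hz⟩
          show g * (z : G) * g⁻¹ ∈ A
          rw [← hz]
          have : g * (g⁻¹ * a * g) * g⁻¹ = a := by group
          rw [this]; exact ha
        · intro h
          exact ⟨g * (z : G) * g⁻¹, h, by group⟩
      have h2 : mres μ ((fun x => g⁻¹ * x * g) '' A)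
          = μ₁ ((Subtype.val : ↥S → G) ⁻¹' A) := by
        rw [mres, h1, hemb₁.map_apply]
      rw [h2, Measure.measure_isMulInvariant_eq_smul_of_isCompact_closure μ₁ μ hclos,
        ENNReal.smul_def]
      rfl
  -- iterated scaling
  have hconjcont : ∀ a b : G, Continuous (fun x : G => a * x * b) := fun a b =>
    (continuous_const.mul continuous_id).mul continuous_const
  have hiter₀ : ∀ (n : ℕ) (A : Set G), IsCompact A →
      mres μ ((fun x => g ^ n * x * (g ^ n)⁻¹) '' A) = (c₀ : ℝ≥0∞) ^ n * mres μ A := by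
    intro n
    induction n with
    | zero =>
      intro A hA
      have h : (fun x : G => g ^ 0 * x * (g ^ 0)⁻¹) '' A = A := by
        have : ∀ x : G, g ^ 0 * x * (g ^ 0)⁻¹ = x := by intro x; simp
        simp only [this, image_id']
      rw [h, pow_zero, one_mul]
    | succ n ih =>
      intro A hA
      have hcomp : (fun x : G => g ^ (n + 1) * x * (g ^ (n + 1))⁻¹) '' A
          = (fun x : G => g * x * g⁻¹) '' ((fun x : G => g ^ n * x * (g ^ n)⁻¹) '' A) := by
        rw [Set.image_image]
        apply Set.image_congr'
        intro x
        rw [pow_succ]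
        group
      rw [hcomp, (hstep _ (hA.image (hconjcont (g ^ n) (g ^ n)⁻¹))).1, ih A hA, pow_succ]
      ring
  have hiter₁ : ∀ (n : ℕ) (A : Set G), IsCompact A →
      mres μ ((fun x => (g ^ n)⁻¹ * x * g ^ n) '' A) = (c₁ : ℝ≥0∞) ^ n * mres μ A := by
    intro n
    induction n with
    | zero =>
      intro A hA
      have h : (fun x : G => (g ^ 0)⁻¹ * x * g ^ 0) '' A = A := by
        have : ∀ x : G, (g ^ 0)⁻¹ * x * g ^ 0 = x := by intro x; simp
        simp only [this, image_id']
      rw [h, pow_zero, one_mul]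
    | succ n ih =>
      intro A hA
      have hcomp : (fun x : G => (g ^ (n + 1))⁻¹ * x * g ^ (n + 1)) '' A
          = (fun x : G => g⁻¹ * x * g) '' ((fun x : G => (g ^ n)⁻¹ * x * g ^ n) '' A) := by
        rw [Set.image_image]
        apply Set.image_congr'
        intro x
        rw [pow_succ]
        group
      rw [hcomp, (hstep _ (hA.image (hconjcont (g ^ n)⁻¹ (g ^ n)))).2, ih A hA, pow_succ]
      ring
  -- the basic compact neighborhood
  obtain ⟨W, hWcomp, hWnhds⟩ := exists_compact_mem_nhds (1 : G)
  set K₀ : Set G := W ∩ C with hK₀def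
  have hK₀comp : IsCompact K₀ := hWcomp.inter_right hC
  have hK₀C : K₀ ⊆ C := inter_subset_right
  have hK₀pos : 0 < mres μ K₀ := by
    have hsub : (Subtype.val : ↥S → G) ⁻¹' (interior W)
        ⊆ (Subtype.val : ↥S → G) ⁻¹' K₀ := by
      intro z hz
      exact ⟨interior_subset hz, z.2⟩
    have hop : IsOpen ((Subtype.val : ↥S → G) ⁻¹' interior W) :=
      isOpen_interior.preimage continuous_subtype_val
    have hne : ((Subtype.val : ↥S → G) ⁻¹' interior W).Nonempty :=
      ⟨1, by simpa using mem_interior_iff_mem_nhds.2 hWnhds⟩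
    exact lt_of_lt_of_le (hop.measure_pos μ hne) (measure_mono hsub)
  have hK₀fin : mres μ K₀ < ∞ := mres_lt_top μ hSc hK₀comp
  -- c₀ * c₁ = 1
  have hc0c1 : (c₀ : ℝ≥0∞) * (c₁ : ℝ≥0∞) = 1 := by
    have h1 : (fun x : G => g * x * g⁻¹) '' ((fun x : G => g⁻¹ * x * g) '' K₀) = K₀ := by
      rw [Set.image_image]
      have : ∀ x : G, g * (g⁻¹ * x * g) * g⁻¹ = x := by intro x; group
      simp only [this, image_id']
    have h2 := (hstep ((fun x : G => g⁻¹ * x * g) '' K₀)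
      (hK₀comp.image (hconjcont g⁻¹ g))).1
    rw [h1, (hstep K₀ hK₀comp).2] at h2
    -- h2 : mres μ K₀ = c₀ * (c₁ * mres μ K₀)
    rw [← mul_assoc] at h2
    have h3 : (1 : ℝ≥0∞) * mres μ K₀ = ((c₀ : ℝ≥0∞) * c₁) * mres μ K₀ := by
      rw [one_mul]; exact h2
    exact ((ENNReal.mul_left_inj hK₀pos.ne' hK₀fin.ne).1 h3).symm
  -- c₀ < 1
  have hμ1 : μ {(1 : ↥S)} = 0 := measure_singleton _
  have hc₀lt : (c₀ : ℝ≥0∞) < 1 := by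
    obtain ⟨O, hOsup, hOopen, hOlt⟩ :=
      Set.exists_isOpen_lt_of_lt {(1 : ↥S)} (mres μ K₀) (by rw [hμ1]; exact hK₀pos)
    have hO1 : (1 : ↥S) ∈ O := hOsup rfl
    have hOnhds : O ∈ 𝓝 (1 : ↥S) := hOopen.mem_nhds hO1
    have h1 : (1 : ↥S) = ⟨(1 : G), S.one_mem⟩ := rfl
    rw [h1, nhds_subtype_eq_comap] at hOnhds
    obtain ⟨U, hUnhds, hUsub⟩ := mem_comap.1 hOnhds
    obtain ⟨N, hN⟩ := exists_pow_conj_subset hC hK₀comp hK₀C hUnhds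
    have himg : (fun x : G => g ^ N * x * (g ^ N)⁻¹) '' K₀ ⊆ U := by
      rintro _ ⟨x, hx, rfl⟩
      exact hN x hx
    have hle : mres μ ((fun x : G => g ^ N * x * (g ^ N)⁻¹) '' K₀) ≤ μ O :=
      le_trans (mres_mono μ himg) (measure_mono hUsub)
    have hlt : (c₀ : ℝ≥0∞) ^ N * mres μ K₀ < mres μ K₀ := by
      rw [← hiter₀ N K₀ hK₀comp]
      exact lt_of_le_of_lt hle hOlt
    by_contra hge
    push_neg at hge
    have hNle : mres μ K₀ ≤ (c₀ : ℝ≥0∞) ^ N * mres μ K₀ :=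
      le_mul_of_one_le_left' (one_le_pow_of_one_le' hge N)
    exact absurd (lt_of_le_of_lt hNle hlt) (lt_irrefl _)
  have hc₁gt : 1 < (c₁ : ℝ≥0∞) := by
    by_contra hle'
    push_neg at hle'
    have h1 : (c₀ : ℝ≥0∞) * c₁ ≤ (c₀ : ℝ≥0∞) * 1 := mul_le_mul_right hle' _
    rw [hc0c1, mul_one] at h1
    exact absurd (lt_of_le_of_lt h1 hc₀lt) (lt_irrefl _)
  -- dichotomy
  by_cases hB : ∃ F : Set G, IsCompact F ∧
      {n : ℕ | 0 < n ∧ (g ^ n ∈ C * F ∨ (g ^ n)⁻¹ ∈ C * F)}.Infinite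
  · -- Case B1 : the powers of g return infinitely often to C * F
    obtain ⟨F, hF, hTinf⟩ := hB
    set R : ℝ≥0∞ := max (mres μ ((F⁻¹ * K₀) * F)) (mres μ ((F * K₀) * F⁻¹)) with hRdef
    have hRfin : R < ∞ := by
      apply max_lt
      · exact mres_lt_top μ hSc ((hF.inv.mul hK₀comp).mul hF)
      · exact mres_lt_top μ hSc ((hF.mul hK₀comp).mul hF.inv)
    have hbound : ∀ n : ℕ, 0 < n → (g ^ n ∈ C * F ∨ (g ^ n)⁻¹ ∈ C * F) →
        (c₁ : ℝ≥0∞) ^ n * mres μ K₀ ≤ R := by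
      intro n hn hor
      rw [← hiter₁ n K₀ hK₀comp]
      rcases hor with hpos | hneg
      · obtain ⟨s, hs, f, hf, hsf⟩ := hpos
        have ht : (g ^ n)⁻¹ * s⁻¹ * g ^ n ∈ C :=
          conj_pow_inv_mem_contrSet n (inv_mem_contrSet hs)
        have himgeq : (fun x : G => (g ^ n)⁻¹ * x * g ^ n) '' K₀
            = (fun x : G => ((g ^ n)⁻¹ * s⁻¹ * g ^ n) * x * ((g ^ n)⁻¹ * s⁻¹ * g ^ n)⁻¹) ''
              ((fun x : G => f⁻¹ * x * f) '' K₀) := by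
          rw [Set.image_image]
          apply Set.image_congr'
          intro x
          rw [← hsf]
          group
        rw [himgeq, mres_conj μ ht]
        refine le_trans (mres_mono μ ?_) (le_max_left _ _)
        rintro _ ⟨x, hx, rfl⟩
        exact Set.mul_mem_mul (Set.mul_mem_mul (Set.inv_mem_inv.2 hf) hx) hf
      · obtain ⟨s, hs, f, hf, hsf⟩ := hneg
        have h2 : g ^ n = f⁻¹ * s⁻¹ := by
          rw [← inv_inv (g ^ n), ← hsf, mul_inv_rev]
        have himgeq : (fun x : G => (g ^ n)⁻¹ * x * g ^ n) '' K₀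
            = (fun x : G => s * x * s⁻¹) '' ((fun x : G => f * x * f⁻¹) '' K₀) := by
          rw [Set.image_image]
          apply Set.image_congr'
          intro x
          rw [← hsf, h2]
          group
        rw [himgeq, mres_conj μ hs]
        refine le_trans (mres_mono μ ?_) (le_max_right _ _)
        rintro _ ⟨x, hx, rfl⟩
        exact Set.mul_mem_mul (Set.mul_mem_mul hf hx) (Set.inv_mem_inv.2 hf)
    have halln : ∀ n : ℕ, (c₁ : ℝ≥0∞) ^ n * mres μ K₀ ≤ R := by
      intro n
      obtain ⟨nn, hnnT, hlt'⟩ := hTinf.exists_gt n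
      refine le_trans (mul_le_mul_left ?_ _) (hbound nn hnnT.1 hnnT.2)
      exact pow_le_pow_right₀ hc₁gt.le (le_of_lt hlt')
    have hq1 : (1 : ℝ) < ((c₁ : ℝ≥0) : ℝ) := by
      have h := hc₁gt
      rw [← ENNReal.coe_one, ENNReal.coe_lt_coe] at h
      exact_mod_cast h
    have hKtR : 0 < (mres μ K₀).toReal := ENNReal.toReal_pos hK₀pos.ne' hK₀fin.ne
    have htend : Tendsto (fun n : ℕ => ((c₁ : ℝ≥0) : ℝ) ^ n * (mres μ K₀).toReal)
        atTop atTop :=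
      Tendsto.atTop_mul_const hKtR (tendsto_pow_atTop_atTop_of_one_lt hq1)
    obtain ⟨n, hn⟩ := (htend.eventually_gt_atTop R.toReal).exists
    have hmono := ENNReal.toReal_mono hRfin.ne (halln n)
    rw [ENNReal.toReal_mul] at hmono
    have heq : (((c₁ : ℝ≥0∞)) ^ n).toReal = ((c₁ : ℝ≥0) : ℝ) ^ n := by
      rw [← ENNReal.coe_pow, ENNReal.coe_toReal]
      exact_mod_cast rfl
    rw [heq] at hmono
    exact absurd (lt_of_lt_of_le hn hmono) (lt_irrefl _)
  · -- Case B2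
    push_neg at hB
    have hTfin : {n : ℕ | 0 < n ∧ (g ^ n ∈ C * W ∨ (g ^ n)⁻¹ ∈ C * W)}.Finite :=
      (hB W hWcomp)
    set X : ℕ → Set G := fun n => {x | x * (g ^ n)⁻¹ ∈ C} ∪ {x | x * g ^ n ∈ C} with hXdef
    have hXclosed : ∀ n, IsClosed (X n) := by
      intro n
      exact IsClosed.union (hC.preimage (continuous_mul_right _))
        (hC.preimage (continuous_mul_right _))
    have hXone : ∀ n : ℕ, 0 < n → (1 : G) ∉ X n := by
      intro n hn h1
      rcases h1 with h | h
      · apply htor n hn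
        have h' : (g ^ n)⁻¹ ∈ C := by simpa using h
        simpa using inv_mem_contrSet h'
      · apply htor n hn
        simpa using h
    set T : Set ℕ := {n : ℕ | 0 < n ∧ (g ^ n ∈ C * W ∨ (g ^ n)⁻¹ ∈ C * W)} with hTdef
    set V : Set G := interior W ∩ ⋂ n ∈ T, (X n)ᶜ with hVdef
    have hVopen : IsOpen V :=
      isOpen_interior.inter (hTfin.isOpen_biInter fun n _ => (hXclosed n).isOpen_compl)
    have hV1 : (1 : G) ∈ V := by
      refine ⟨mem_interior_iff_mem_nhds.2 hWnhds, ?_⟩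
      exact mem_iInter₂.2 fun n hn => hXone n hn.1
    set D : Subgroup G :=
      { carrier := {x | ∃ k : ℤ, ∃ s, s ∈ C ∧ x = g ^ k * s}
        one_mem' := ⟨0, 1, one_mem_contrSet g, by simp⟩
        mul_mem' := by
          rintro a b ⟨k, s, hs, rfl⟩ ⟨l, t, ht, rfl⟩
          refine ⟨k + l, (g ^ (-l) * s * (g ^ (-l))⁻¹) * t,
            mul_mem_contrSet (conj_zpow_mem_contrSet (-l) s hs) ht, ?_⟩
          rw [zpow_add, zpow_neg]
          group
        inv_mem' := by
          rintro a ⟨k, s, hs, rfl⟩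
          refine ⟨-k, g ^ k * s⁻¹ * (g ^ k)⁻¹,
            conj_zpow_mem_contrSet k s⁻¹ (inv_mem_contrSet hs), ?_⟩
          rw [zpow_neg]
          group } with hDdef
    set H : Subgroup G := D.topologicalClosure with hHdef
    have hHc : IsClosed (H : Set G) := D.isClosed_topologicalClosure
    have hCD : C ⊆ (D : Set G) := fun x hx => ⟨0, x, hx, by simp⟩
    have hDH : (D : Set G) ⊆ (H : Set G) := D.le_topologicalClosure
    have hCH : C ⊆ (H : Set G) := fun x hx => hDH (hCD hx)
    have hgD : g ∈ (D : Set G) := ⟨1, 1, one_mem_contrSet g, by simp⟩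
    have hgH : g ∈ H := hDH hgD
    have hVD : V ∩ (D : Set G) ⊆ C := by
      rintro x ⟨hxV, k, s, hs, rfl⟩
      rcases eq_or_ne k 0 with hk | hk
      · subst hk; simpa using hs
      exfalso
      have hs' : g ^ k * s * (g ^ k)⁻¹ ∈ C := conj_zpow_mem_contrSet k s hs
      have hxW : g ^ k * s ∈ W := interior_subset hxV.1
      have hmm : (g ^ k * s * (g ^ k)⁻¹)⁻¹ * (g ^ k * s) = g ^ k := by group
      rcases hk.lt_or_gt with hkneg | hkpos
      · set n : ℕ := (-k).toNat with hndef
        have hnk : (n : ℤ) = -k := Int.toNat_of_nonneg (by omega)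
        have hnpos : 0 < n := by omega
        have hgn : (g ^ n : G) = (g ^ k)⁻¹ := by
          rw [← zpow_natCast, hnk, zpow_neg]
        have hmemT : n ∈ T := by
          refine ⟨hnpos, Or.inr ?_⟩
          have heq : (g ^ n)⁻¹ = (g ^ k * s * (g ^ k)⁻¹)⁻¹ * (g ^ k * s) := by
            rw [hgn, inv_inv, hmm]
          rw [heq]
          exact Set.mul_mem_mul (inv_mem_contrSet hs') hxW
        have hxX : g ^ k * s ∈ X n := by
          refine Or.inr ?_
          show (g ^ k * s) * g ^ n ∈ C
          rw [hgn]
          exact hs'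
        exact (mem_iInter₂.1 hxV.2 n hmemT) hxX
      · set n : ℕ := k.toNat with hndef
        have hnk : (n : ℤ) = k := Int.toNat_of_nonneg (by omega)
        have hnpos : 0 < n := by omega
        have hgn : (g ^ n : G) = g ^ k := by rw [← zpow_natCast, hnk]
        have hmemT : n ∈ T := by
          refine ⟨hnpos, Or.inl ?_⟩
          have heq : g ^ n = (g ^ k * s * (g ^ k)⁻¹)⁻¹ * (g ^ k * s) := by
            rw [hgn, hmm]
          rw [heq]
          exact Set.mul_mem_mul (inv_mem_contrSet hs') hxW
        have hxX : g ^ k * s ∈ X n := by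
          refine Or.inl ?_
          show (g ^ k * s) * (g ^ n)⁻¹ ∈ C
          rw [hgn]
          exact hs'
        exact (mem_iInter₂.1 hxV.2 n hmemT) hxX
    have hVH : V ∩ (H : Set G) ⊆ C := by
      intro x hx
      have hxc : x ∈ closure (D : Set G) := by
        have := hx.2
        rwa [hHdef, Subgroup.topologicalClosure_coe] at this
      have h1 : x ∈ closure (V ∩ (D : Set G)) := hVopen.inter_closure ⟨hx.1, hxc⟩
      exact closure_minimal hVD hC h1
    -- Haar measure on H
    haveI : BorelSpace ↥H := Subtype.borelSpace (H : Set G)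
    haveI : LocallyCompactSpace ↥H := hHc.locallyCompactSpace
    haveI hHne : (𝓝[≠] (1 : ↥H)).NeBot := by
      rw [← mem_closure_iff_nhdsWithin_neBot]
      rw [mem_closure_iff_nhds]
      intro t ht
      have h1 : (1 : ↥H) = ⟨(1 : G), H.one_mem⟩ := rfl
      rw [h1, nhds_subtype_eq_comap] at ht
      obtain ⟨U, hU, hUsub⟩ := mem_comap.1 ht
      obtain ⟨x, hxU, hxC, hx1⟩ := hisol' U hU
      refine ⟨⟨x, hCH hxC⟩, hUsub hxU, ?_⟩
      simp only [mem_compl_iff, mem_singleton_iff]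
      intro hcontra
      exact hx1 (congrArg Subtype.val hcontra)
    let ν : Measure ↥H := Measure.haar
    haveI hνh : ν.IsHaarMeasure := Measure.isHaarMeasure_haarMeasure _
    haveI hνreg : ν.Regular := Measure.regular_haarMeasure
    haveI hνright : ν.IsMulRightInvariant := hunim H hHc ν hνh
    have hν1 : ν {(1 : ↥H)} = 0 := measure_singleton _
    have hKpos : 0 < mres ν K₀ := by
      have hsub : (Subtype.val : ↥H → G) ⁻¹' (interior W ∩ V)
          ⊆ (Subtype.val : ↥H → G) ⁻¹' K₀ := by
        intro z hz
        exact ⟨interior_subset hz.1, hVH ⟨hz.2, z.2⟩⟩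
      have hop : IsOpen ((Subtype.val : ↥H → G) ⁻¹' (interior W ∩ V)) :=
        (isOpen_interior.inter hVopen).preimage continuous_subtype_val
      have hne : ((Subtype.val : ↥H → G) ⁻¹' (interior W ∩ V)).Nonempty := by
        refine ⟨1, ?_⟩
        show ((1 : ↥H) : G) ∈ interior W ∩ V
        rw [OneMemClass.coe_one]
        exact ⟨mem_interior_iff_mem_nhds.2 hWnhds, hV1⟩
      exact lt_of_lt_of_le (hop.measure_pos ν hne) (measure_mono hsub)
    obtain ⟨O, hOsup, hOopen, hOlt⟩ :=
      Set.exists_isOpen_lt_of_lt {(1 : ↥H)} (mres ν K₀) (by rw [hν1]; exact hKpos)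
    have hOnhds : O ∈ 𝓝 (1 : ↥H) := hOopen.mem_nhds (hOsup rfl)
    have h1H : (1 : ↥H) = ⟨(1 : G), H.one_mem⟩ := rfl
    rw [h1H, nhds_subtype_eq_comap] at hOnhds
    obtain ⟨U, hUnhds, hUsub⟩ := mem_comap.1 hOnhds
    obtain ⟨N, hN⟩ := exists_pow_conj_subset hC hK₀comp hK₀C hUnhds
    have hconjinv : mres ν ((fun x : G => g ^ N * x * (g ^ N)⁻¹) '' K₀) = mres ν K₀ :=
      mres_conj ν (pow_mem hgH N) K₀
    have hle : mres ν ((fun x : G => g ^ N * x * (g ^ N)⁻¹) '' K₀) ≤ ν O := by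
      refine le_trans (mres_mono ν ?_) (measure_mono hUsub)
      rintro _ ⟨x, hx, rfl⟩
      exact hN x hx
    rw [hconjinv] at hle
    exact absurd (lt_of_le_of_lt hle hOlt) (lt_irrefl _)
end

section
/- Let E be a locally compact second countable space and P a Markov operator on E such that for every u ∈ C_c⁺(E) with u not identically zero, Σ_{k≥0} Pᵏu(x) = +∞ for all x ∈ E. If f is a positive continuous function on E with Pf ≤ f (pointwise), then f is constant. -/
open Filter Topology MeasureTheory ENNReal Set

noncomputable def mop {E : Type*} [MeasurableSpace E] (κ : E → Measure E)
    (f : E → ℝ≥0∞) (x : E) : ℝ≥0∞ :=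
  ∫⁻ y, f y ∂(κ x)

lemma mop_mono {E : Type*} [MeasurableSpace E] (κ : E → Measure E)
    {φ ψ : E → ℝ≥0∞} (h : ∀ z, φ z ≤ ψ z) : ∀ z, mop κ φ z ≤ mop κ ψ z :=
  fun _ => lintegral_mono h

lemma mop_iterate_mono {E : Type*} [MeasurableSpace E] (κ : E → Measure E)
    {φ ψ : E → ℝ≥0∞} (h : ∀ z, φ z ≤ ψ z) (n : ℕ) :
    ∀ z, (mop κ)^[n] φ z ≤ (mop κ)^[n] ψ z := by
  induction n with
  | zero => simpa using h
  | succ n ih =>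
      intro z
      rw [Function.iterate_succ_apply', Function.iterate_succ_apply']
      exact mop_mono κ ih z

lemma mop_measurable {E : Type*} [MeasurableSpace E] {κ : E → Measure E}
    (hκ : Measurable κ) {φ : E → ℝ≥0∞} (hφ : Measurable φ) :
    Measurable (mop κ φ) :=
  (Measure.measurable_lintegral hφ).comp hκ

lemma mop_iterate_measurable {E : Type*} [MeasurableSpace E] {κ : E → Measure E}
    (hκ : Measurable κ) {φ : E → ℝ≥0∞} (hφ : Measurable φ) (n : ℕ) :
    Measurable ((mop κ)^[n] φ) := by
  induction n with
  | zero => simpa using hφ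
  | succ n ih => rw [Function.iterate_succ_apply']; exact mop_measurable hκ ih

lemma urysohn_minorant {E : Type*} [TopologicalSpace E] [LocallyCompactSpace E] [T2Space E]
    {h : E → ℝ} (hc : Continuous h) (hn : ∀ z, 0 ≤ h z) {z₀ : E} (hz : 0 < h z₀) :
    ∃ u : E → ℝ, Continuous u ∧ HasCompactSupport u ∧ (∀ z, 0 ≤ u z) ∧ u ≠ 0 ∧
      (∀ z, u z ≤ h z) := by
  set V : Set E := h ⁻¹' Set.Ioi (h z₀ / 2) with hV
  have hVopen : IsOpen V := isOpen_Ioi.preimage hc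
  have hz₀V : z₀ ∈ V := by simp [hV]; linarith
  obtain ⟨φ, hφ1, hφ0, hφsupp, hφrange⟩ :=
    exists_continuous_one_zero_of_isCompact (isCompact_singleton (x := z₀))
      hVopen.isClosed_compl (by simpa using hz₀V)
  refine ⟨fun z => (h z₀ / 2) * φ z, continuous_const.mul φ.continuous,
    hφsupp.mul_left, fun z => mul_nonneg (by linarith) (hφrange z).1, ?_, ?_⟩
  · intro h0
    have : (h z₀ / 2) * φ z₀ = 0 := congrFun h0 z₀
    rw [hφ1 (Set.mem_singleton z₀)] at this
    simp at this
    linarith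
  · intro z
    by_cases hzV : z ∈ V
    · calc (h z₀ / 2) * φ z ≤ (h z₀ / 2) * 1 := by
            apply mul_le_mul_of_nonneg_left (hφrange z).2 (by linarith)
        _ ≤ h z := by
            have : h z₀ / 2 < h z := hzV
            linarith
    · have : φ z = 0 := hφ0 hzV
      simp only [this, mul_zero]
      exact hn z

/-- Let `E` be a locally compact second countable space and `P` a Markov operator on `E`
(given by a probability transition kernel `κ` preserving bounded continuous functions)
such that `Σₖ Pᵏu = +∞` everywhere for every nonzero `u ∈ C_c⁺(E)`. Then every positive
continuous `P`-superharmonic function on `E` is constant. -/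
theorem stmt6 {E : Type*} [TopologicalSpace E] [LocallyCompactSpace E]
    [SecondCountableTopology E] [T2Space E] [MeasurableSpace E] [BorelSpace E]
    (κ : E → Measure E) (hκmeas : Measurable κ)
    (hκprob : ∀ x, IsProbabilityMeasure (κ x))
    (hFeller : ∀ g : BoundedContinuousFunction E ℝ, Continuous fun x => ∫ y, g y ∂(κ x))
    (hdiv : ∀ u : E → ℝ, Continuous u → HasCompactSupport u → (∀ x, 0 ≤ u x) → u ≠ 0 →
      ∀ x : E, ∑' k : ℕ, (mop κ)^[k] (fun y => ENNReal.ofReal (u y)) x = ⊤)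
    (f : E → ℝ) (hfc : Continuous f) (hfpos : ∀ x, 0 < f x)
    (hsuper : ∀ x, ∫⁻ y, ENNReal.ofReal (f y) ∂(κ x) ≤ ENNReal.ofReal (f x)) :
    ∀ x y : E, f x = f y := by
  suffices H : ∀ x y : E, f x < f y → False by
    intro x y
    rcases lt_trichotomy (f x) (f y) with h | h | h
    · exact (H x y h).elim
    · exact h
    · exact (H y x h).elim
  intro x y hxy
  obtain ⟨c, hc1, hc2⟩ := exists_between hxy
  have hcpos : 0 < c := (hfpos x).trans hc1
  set g : E → ℝ := fun z => min (f z) c with hgdef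
  have hgc : Continuous g := hfc.min continuous_const
  have hgnn : ∀ z, 0 ≤ g z := fun z => le_min (hfpos z).le hcpos.le
  have hgle : ∀ z, g z ≤ c := fun _ => min_le_right _ _
  set g' : E → ℝ≥0∞ := fun z => ENNReal.ofReal (g z) with hg'def
  have hg'meas : Measurable g' := (ENNReal.continuous_ofReal.comp hgc).measurable
  have hg'le : ∀ z, g' z ≤ ENNReal.ofReal c := fun z => ENNReal.ofReal_le_ofReal (hgle z)
  have hofRealMono : Monotone (ENNReal.ofReal) := fun _ _ hab => ENNReal.ofReal_le_ofReal hab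
  -- g is superharmonic
  have hsuperg : ∀ z, mop κ g' z ≤ g' z := by
    intro z
    haveI := hκprob z
    have h1 : mop κ g' z ≤ ENNReal.ofReal (f z) :=
      le_trans (lintegral_mono fun w => ENNReal.ofReal_le_ofReal (min_le_left _ _)) (hsuper z)
    have h2 : mop κ g' z ≤ ENNReal.ofReal c := by
      refine le_trans (lintegral_mono fun w => hg'le w) ?_
      rw [lintegral_const, measure_univ, mul_one]
    calc mop κ g' z ≤ min (ENNReal.ofReal (f z)) (ENNReal.ofReal c) := le_min h1 h2
      _ = g' z := (hofRealMono.map_min).symm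
  -- the real-valued action of P on g
  set gb : BoundedContinuousFunction E ℝ :=
    BoundedContinuousFunction.ofNormedAddCommGroup g hgc c (fun z => by
      rw [Real.norm_eq_abs, abs_le]
      exact ⟨by linarith [hgnn z], hgle z⟩) with hgbdef
  have hgbcoe : ∀ z, gb z = g z := fun z => rfl
  set Pg : E → ℝ := fun z => ∫ w, g w ∂(κ z) with hPgdef
  have hPgc : Continuous Pg := by
    have h := hFeller gb
    exact h
  have hPgnn : ∀ z, 0 ≤ Pg z := fun z => integral_nonneg fun w => hgnn w
  have hint : ∀ z, Integrable g (κ z) := by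
    intro z
    haveI := hκprob z
    exact gb.integrable (κ z)
  have key : ∀ z, mop κ g' z = ENNReal.ofReal (Pg z) := by
    intro z
    exact (MeasureTheory.ofReal_integral_eq_lintegral_ofReal (hint z)
      (Filter.Eventually.of_forall hgnn)).symm
  have hPgle : ∀ z, Pg z ≤ g z := by
    intro z
    have h := hsuperg z
    rw [key z] at h
    exact (ENNReal.ofReal_le_ofReal_iff (hgnn z)).mp h
  -- the excess h = g - Pg
  set h : E → ℝ := fun z => g z - Pg z with hhdef
  have hhc : Continuous h := hgc.sub hPgc
  have hhnn : ∀ z, 0 ≤ h z := fun z => sub_nonneg.mpr (hPgle z)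
  set h' : E → ℝ≥0∞ := fun z => ENNReal.ofReal (h z) with hh'def
  have hh'meas : Measurable h' := (ENNReal.continuous_ofReal.comp hhc).measurable
  have hh'eq : ∀ z, h' z = g' z - mop κ g' z := by
    intro z
    show ENNReal.ofReal (g z - Pg z) = ENNReal.ofReal (g z) - mop κ g' z
    rw [key z]
    exact ENNReal.ofReal_sub _ (hPgnn z)
  -- telescoping estimate
  have hstep : ∀ n, ∀ z, (mop κ)^[n] h' z + (mop κ)^[n + 1] g' z ≤ (mop κ)^[n] g' z := by
    intro n
    induction n with
    | zero =>
        intro z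
        simp only [Function.iterate_zero_apply, Function.iterate_one]
        rw [hh'eq z]
        exact (tsub_add_cancel_of_le (hsuperg z)).le
    | succ n ih =>
        intro z
        simp only [Function.iterate_succ_apply'] at ih ⊢
        calc mop κ ((mop κ)^[n] h') z + mop κ (mop κ ((mop κ)^[n] g')) z
            = ∫⁻ w, ((mop κ)^[n] h' w + mop κ ((mop κ)^[n] g') w) ∂(κ z) :=
              (lintegral_add_left (mop_iterate_measurable hκmeas hh'meas n) _).symm
          _ ≤ ∫⁻ w, (mop κ)^[n] g' w ∂(κ z) := lintegral_mono ih
          _ = mop κ ((mop κ)^[n] g') z := rfl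
  have hsum : ∀ n, ∀ z, (∑ k ∈ Finset.range n, (mop κ)^[k] h' z) ≤ g' z := by
    have key2 : ∀ n, ∀ z,
        (∑ k ∈ Finset.range n, (mop κ)^[k] h' z) + (mop κ)^[n] g' z ≤ g' z := by
      intro n
      induction n with
      | zero => intro z; simp
      | succ n ih =>
          intro z
          rw [Finset.sum_range_succ, add_assoc]
          exact le_trans (add_le_add le_rfl (hstep n z)) (ih z)
    exact fun n z => le_trans le_self_add (key2 n z)
  have htsum : ∀ z, (∑' k : ℕ, (mop κ)^[k] h' z) ≤ g' z := by
    intro z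
    rw [ENNReal.tsum_eq_iSup_nat]
    exact iSup_le fun n => hsum n z
  -- hence the excess vanishes and g is harmonic
  have hh0 : ∀ z, h z = 0 := by
    by_contra hcontra
    push_neg at hcontra
    obtain ⟨z₀, hz₀⟩ := hcontra
    have hz₀pos : 0 < h z₀ := lt_of_le_of_ne (hhnn z₀) (Ne.symm hz₀)
    obtain ⟨u, huc, hus, hunn, hune, hule⟩ := urysohn_minorant hhc hhnn hz₀pos
    have hd := hdiv u huc hus hunn hune z₀
    have hle : (∑' k : ℕ, (mop κ)^[k] (fun w => ENNReal.ofReal (u w)) z₀) ≤ g' z₀ :=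
      le_trans (ENNReal.tsum_le_tsum fun k =>
        mop_iterate_mono κ (fun w => ENNReal.ofReal_le_ofReal (hule w)) k z₀) (htsum z₀)
    rw [hd] at hle
    have : g' z₀ = ⊤ := top_le_iff.mp hle
    exact ENNReal.ofReal_ne_top this
  have harm : ∀ z, mop κ g' z = g' z := by
    intro z
    have hz : g z = Pg z := by
      have := hh0 z
      have h2 : g z - Pg z = 0 := this
      linarith
    rw [key z, ← hz]
  -- the function h2 = c - g is harmonic
  set h2 : E → ℝ := fun z => c - g z with hh2def
  have hh2c : Continuous h2 := continuous_const.sub hgc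
  have hh2nn : ∀ z, 0 ≤ h2 z := fun z => sub_nonneg.mpr (hgle z)
  set h2' : E → ℝ≥0∞ := fun z => ENNReal.ofReal (h2 z) with hh2'def
  have hh2'eq : ∀ z, h2' z = ENNReal.ofReal c - g' z := fun z =>
    ENNReal.ofReal_sub _ (hgnn z)
  have hfix : mop κ h2' = h2' := by
    funext z
    haveI := hκprob z
    have hb : (∫⁻ w, g' w ∂(κ z)) ≤ ENNReal.ofReal c := by
      refine le_trans (lintegral_mono fun w => hg'le w) ?_
      rw [lintegral_const, measure_univ, mul_one]
    have hfin : (∫⁻ w, g' w ∂(κ z)) ≠ ⊤ := ne_top_of_le_ne_top ENNReal.ofReal_ne_top hb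
    calc mop κ h2' z = ∫⁻ w, ((fun _ : E => ENNReal.ofReal c) w - g' w) ∂(κ z) :=
          lintegral_congr fun w => hh2'eq w
      _ = (∫⁻ _, ENNReal.ofReal c ∂(κ z)) - ∫⁻ w, g' w ∂(κ z) :=
          lintegral_sub hg'meas hfin (Filter.Eventually.of_forall fun w => hg'le w)
      _ = ENNReal.ofReal c - g' z := by
          rw [lintegral_const, measure_univ, mul_one]
          congr 1
          exact harm z
      _ = h2' z := (hh2'eq z).symm
  have hiter2 : ∀ k : ℕ, (mop κ)^[k] h2' = h2' := fun k => Function.iterate_fixed hfix k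
  -- conclude: a minorant of h2 supported near x has all iterates vanishing at y
  have h2xpos : 0 < h2 x := by
    have hx : g x = f x := min_eq_left hc1.le
    show 0 < c - g x
    rw [hx]
    linarith
  obtain ⟨u, huc, hus, hunn, hune, hule⟩ := urysohn_minorant hh2c hh2nn h2xpos
  have hdivy := hdiv u huc hus hunn hune y
  have hzero : ∀ k : ℕ, (mop κ)^[k] (fun w => ENNReal.ofReal (u w)) y = 0 := by
    intro k
    have h1 : (mop κ)^[k] (fun w => ENNReal.ofReal (u w)) y ≤ (mop κ)^[k] h2' y :=
      mop_iterate_mono κ (fun w => ENNReal.ofReal_le_ofReal (hule w)) k y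
    rw [hiter2 k] at h1
    have hy : h2' y = 0 := by
      have hgy : g y = c := min_eq_right hc2.le
      show ENNReal.ofReal (c - g y) = 0
      rw [hgy]
      simp
    exact le_antisymm (hy ▸ h1) zero_le
  have hzsum : (∑' k : ℕ, (mop κ)^[k] (fun w => ENNReal.ofReal (u w)) y) = 0 := by
    rw [tsum_congr hzero]
    exact tsum_zero
  rw [hdivy] at hzsum
  exact ENNReal.top_ne_zero hzsum
end

section
/- Let E be a locally compact second countable space and P a Markov operator on E such that Σ_{k≥0} Pᵏu = +∞ on E for every nonzero u ∈ C_c⁺(E). Then every nonzero P-invariant positive Radon measure ν on E satisfies ν(φ) > 0 for every nonzero φ ∈ C_c⁺(E); i.e., ν has full support relative to compactly supported test functions. -/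
open Filter Topology MeasureTheory ENNReal

/-- An increasing exhaustion by continuous compactly supported `[0,1]`-valued functions. -/
lemma exists_exhaustion_aux7 (E : Type*) [TopologicalSpace E] [LocallyCompactSpace E]
    [SecondCountableTopology E] [T2Space E] :
    ∃ ψ : ℕ → E → ℝ, (∀ n, Continuous (ψ n)) ∧ (∀ n, HasCompactSupport (ψ n)) ∧
      (∀ n x, ψ n x ∈ Set.Icc (0:ℝ) 1) ∧ (∀ n x, ψ n x ≤ ψ (n+1) x) ∧
      (∀ x, ∃ n, ψ n x = 1) := by
  let K := CompactExhaustion.choice E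
  have hf : ∀ n : ℕ, ∃ f : C(E, ℝ), Set.EqOn f 1 (K n) ∧ HasCompactSupport f ∧
      ∀ x, f x ∈ Set.Icc (0:ℝ) 1 := by
    intro n
    obtain ⟨f, h1, _, hcs, hicc⟩ :=
      exists_continuous_one_zero_of_isCompact (K.isCompact n) isClosed_empty
        (Set.disjoint_empty _)
    exact ⟨f, h1, hcs, hicc⟩
  choose f hf1 hfcs hficc using hf
  -- running max
  let ψ : ℕ → E → ℝ := fun n => Nat.rec (fun x => f 0 x)
    (fun m ih x => max (ih x) (f (m+1) x)) n
  have hψc : ∀ n, Continuous (ψ n) := by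
    intro n; induction n with
    | zero => exact (f 0).continuous
    | succ m ih => exact ih.max (f (m+1)).continuous
  have hψcs : ∀ n, HasCompactSupport (ψ n) := by
    intro n; induction n with
    | zero => exact hfcs 0
    | succ m ih =>
      have : HasCompactSupport (fun x => max (ψ m x) (f (m+1) x)) := by
        apply HasCompactSupport.intro ((ih.union (hfcs (m+1))) : IsCompact _)
        intro x hx
        simp only [Set.mem_union] at hx
        push_neg at hx
        have h1 : ψ m x = 0 := image_eq_zero_of_notMem_tsupport hx.1
        have h2 : f (m+1) x = 0 := image_eq_zero_of_notMem_tsupport hx.2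
        simp [h1, h2]
      exact this
  have hψicc : ∀ n x, ψ n x ∈ Set.Icc (0:ℝ) 1 := by
    intro n; induction n with
    | zero => exact hficc 0
    | succ m ih =>
      intro x
      exact ⟨le_max_of_le_left (ih x).1, max_le (ih x).2 (hficc (m+1) x).2⟩
  have hψmono : ∀ n x, ψ n x ≤ ψ (n+1) x := fun n x => le_max_left _ _
  have hψge : ∀ n x, f n x ≤ ψ n x := by
    intro n; induction n with
    | zero => intro x; exact le_rfl
    | succ m ih => intro x; exact le_max_right _ _
  refine ⟨ψ, hψc, hψcs, hψicc, hψmono, fun x => ?_⟩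
  obtain ⟨n, hn⟩ := K.exists_mem x
  refine ⟨n, le_antisymm (hψicc n x).2 ?_⟩
  calc (1:ℝ) = f n x := (hf1 n hn).symm
  _ ≤ ψ n x := hψge n x

/-- Extended invariance: the invariance of `ν` under the kernel `κ` extends from compactly
supported continuous nonnegative test functions to all continuous nonnegative functions. -/
lemma inv_ext_aux7 {E : Type*} [TopologicalSpace E] [LocallyCompactSpace E]
    [SecondCountableTopology E] [T2Space E] [MeasurableSpace E] [BorelSpace E]
    (κ : E → Measure E) (hκmeas : Measurable κ) (ν : Measure E)
    (hinv : ∀ φ : E → ℝ, Continuous φ → HasCompactSupport φ → (∀ x, 0 ≤ φ x) →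
      ∫⁻ x, mop κ (fun y => ENNReal.ofReal (φ y)) x ∂ν = ∫⁻ x, ENNReal.ofReal (φ x) ∂ν)
    (u : E → ℝ) (hu : Continuous u) (hu0 : ∀ x, 0 ≤ u x) :
    ∫⁻ x, mop κ (fun y => ENNReal.ofReal (u y)) x ∂ν = ∫⁻ x, ENNReal.ofReal (u x) ∂ν := by
  obtain ⟨ψ, hψc, hψcs, hψicc, hψmono, hψone⟩ := exists_exhaustion_aux7 E
  set F : ℕ → E → ℝ≥0∞ := fun n x => ENNReal.ofReal (u x * ψ n x) with hF
  have hFmeas : ∀ n, Measurable (F n) :=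
    fun n => ((hu.mul (hψc n)).measurable).ennreal_ofReal
  have hFmono : Monotone F := by
    apply monotone_nat_of_le_succ
    intro n x
    exact ENNReal.ofReal_le_ofReal (mul_le_mul_of_nonneg_left (hψmono n x) (hu0 x))
  have hFsup : ∀ x, (⨆ n, F n x) = ENNReal.ofReal (u x) := by
    intro x
    apply le_antisymm
    · refine iSup_le fun n => ENNReal.ofReal_le_ofReal ?_
      calc u x * ψ n x ≤ u x * 1 := mul_le_mul_of_nonneg_left (hψicc n x).2 (hu0 x)
      _ = u x := mul_one _
    · obtain ⟨n, hn⟩ := hψone x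
      refine le_trans (le_of_eq ?_) (le_iSup (fun n => F n x) n)
      simp [hF, hn]
  have hFinv : ∀ n, ∫⁻ x, mop κ (F n) x ∂ν = ∫⁻ x, F n x ∂ν := fun n =>
    hinv (fun x => u x * ψ n x) (hu.mul (hψc n)) ((hψcs n).mul_left)
      (fun x => mul_nonneg (hu0 x) (hψicc n x).1)
  have hmopmeas : ∀ n, Measurable (mop κ (F n)) := fun n =>
    (Measure.measurable_lintegral (hFmeas n)).comp hκmeas
  have hmopsup : ∀ x, mop κ (fun y => ENNReal.ofReal (u y)) x = ⨆ n, mop κ (F n) x := by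
    intro x
    have : mop κ (fun y => ENNReal.ofReal (u y)) x = ∫⁻ y, ⨆ n, F n y ∂(κ x) := by
      simp only [mop]; congr 1; ext y; exact (hFsup y).symm
    rw [this, lintegral_iSup hFmeas hFmono]
    rfl
  have hmopmono : Monotone fun n => mop κ (F n) := by
    intro m n hmn x
    exact lintegral_mono fun y => hFmono hmn y
  calc ∫⁻ x, mop κ (fun y => ENNReal.ofReal (u y)) x ∂ν
      = ∫⁻ x, ⨆ n, mop κ (F n) x ∂ν := by simp only [hmopsup]
    _ = ⨆ n, ∫⁻ x, mop κ (F n) x ∂ν := lintegral_iSup hmopmeas hmopmono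
    _ = ⨆ n, ∫⁻ x, F n x ∂ν := by simp only [hFinv]
    _ = ∫⁻ x, ⨆ n, F n x ∂ν := (lintegral_iSup hFmeas hFmono).symm
    _ = ∫⁻ x, ENNReal.ofReal (u x) ∂ν := by simp only [hFsup]

/-- Let `E` be a locally compact second countable space and `P` a Markov operator on `E`
such that `Σₖ Pᵏu = +∞` on `E` for every nonzero `u ∈ C_c⁺(E)`. Then every nonzero
`P`-invariant positive Radon measure `ν` on `E` satisfies `ν(φ) > 0` for every nonzero
`φ ∈ C_c⁺(E)`. -/
theorem stmt7 {E : Type*} [TopologicalSpace E] [LocallyCompactSpace E]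
    [SecondCountableTopology E] [T2Space E] [MeasurableSpace E] [BorelSpace E]
    (κ : E → Measure E) (hκmeas : Measurable κ)
    (hκprob : ∀ x, IsProbabilityMeasure (κ x))
    (hFeller : ∀ g : BoundedContinuousFunction E ℝ, Continuous fun x => ∫ y, g y ∂(κ x))
    (hdiv : ∀ u : E → ℝ, Continuous u → HasCompactSupport u → (∀ x, 0 ≤ u x) → u ≠ 0 →
      ∀ x : E, ∑' k : ℕ, (mop κ)^[k] (fun y => ENNReal.ofReal (u y)) x = ⊤)
    (ν : Measure E) (hν0 : ν ≠ 0)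
    (hRadon : IsFiniteMeasureOnCompacts ν) (hreg : ν.InnerRegular)
    (hinv : ∀ φ : E → ℝ, Continuous φ → HasCompactSupport φ → (∀ x, 0 ≤ φ x) →
      ∫⁻ x, mop κ (fun y => ENNReal.ofReal (φ y)) x ∂ν = ∫⁻ x, ENNReal.ofReal (φ x) ∂ν) :
    ∀ φ : E → ℝ, Continuous φ → HasCompactSupport φ → (∀ x, 0 ≤ φ x) → φ ≠ 0 →
      0 < ∫⁻ x, ENNReal.ofReal (φ x) ∂ν := by
  intro φ hφc hφcs hφ0 hφne
  by_contra h
  push_neg at h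
  have hI : ∫⁻ x, ENNReal.ofReal (φ x) ∂ν = 0 := le_antisymm h zero_le
  -- construct the iterates g k of φ under the Markov operator, as real functions
  obtain ⟨B, hB⟩ := hφcs.exists_bound_of_continuous hφc
  set g : ℕ → E → ℝ := fun k => Nat.rec φ (fun _ ih x => ∫ y, ih y ∂(κ x)) k with hg
  have hgsucc : ∀ k x, g (k+1) x = ∫ y, g k y ∂(κ x) := fun k x => rfl
  have hgprop : ∀ k, Continuous (g k) ∧ (∀ x, 0 ≤ g k x) ∧ (∀ x, g k x ≤ B) := by
    intro k; induction k with
    | zero => exact ⟨hφc, hφ0, fun x => (abs_le.mp (hB x)).2⟩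
    | succ m ih =>
      obtain ⟨hc, h0, hb⟩ := ih
      have := hκprob
      have hBnn : ∀ x, ‖g m x‖ ≤ B := by
        intro x; rw [Real.norm_eq_abs, abs_of_nonneg (h0 x)]; exact hb x
      set G : BoundedContinuousFunction E ℝ :=
        BoundedContinuousFunction.ofNormedAddCommGroup (g m) hc B hBnn with hG
      have hceq : ∀ x, g (m+1) x = ∫ y, G y ∂(κ x) := fun x => rfl
      refine ⟨?_, ?_, ?_⟩
      · have := hFeller G
        simpa [← hceq] using this
      · intro x
        rw [hgsucc]
        exact integral_nonneg h0
      · intro x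
        rw [hgsucc]
        calc ∫ y, g m y ∂(κ x) ≤ ∫ _, B ∂(κ x) := by
              apply integral_mono _ (integrable_const B) hb
              exact G.integrable (κ x)
          _ = B := by simp [(hκprob x).measure_univ]
  have hmop : ∀ k x, mop κ (fun y => ENNReal.ofReal (g k y)) x
      = ENNReal.ofReal (g (k+1) x) := by
    intro k x
    obtain ⟨hc, h0, hb⟩ := hgprop k
    have hBnn : ∀ y, ‖g k y‖ ≤ B := by
      intro y; rw [Real.norm_eq_abs, abs_of_nonneg (h0 y)]; exact hb y
    have hint : Integrable (g k) (κ x) :=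
      (BoundedContinuousFunction.ofNormedAddCommGroup (g k) hc B hBnn).integrable (κ x)
    rw [hgsucc, mop, ← ofReal_integral_eq_lintegral_ofReal hint (Filter.Eventually.of_forall h0)]
  have hiter : ∀ k, (mop κ)^[k] (fun y => ENNReal.ofReal (φ y))
      = fun x => ENNReal.ofReal (g k x) := by
    intro k; induction k with
    | zero => rfl
    | succ m ih =>
      rw [Function.iterate_succ_apply', ih]
      ext x
      exact hmop m x
  -- all the iterated integrals vanish
  have hIk : ∀ k, ∫⁻ x, ENNReal.ofReal (g k x) ∂ν = 0 := by
    intro k; induction k with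
    | zero => exact hI
    | succ m ih =>
      have : ∫⁻ x, ENNReal.ofReal (g (m+1) x) ∂ν
          = ∫⁻ x, mop κ (fun y => ENNReal.ofReal (g m y)) x ∂ν := by
        congr 1; ext x; exact (hmop m x).symm
      rw [this, inv_ext_aux7 κ hκmeas ν hinv (g m) (hgprop m).1 (fun x => (hgprop m).2.1 x), ih]
  -- find a compact set of positive measure
  have hνuniv : 0 < ν Set.univ := by
    rcases eq_or_lt_of_le (zero_le : 0 ≤ ν Set.univ) with h' | h'
    · exact absurd (Measure.measure_univ_eq_zero.mp h'.symm) hν0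
    · exact h'
  obtain ⟨K, -, hKc, hK⟩ := hreg.innerRegular MeasurableSet.univ 0 hνuniv
  -- partial sums
  set s : ℕ → E → ℝ := fun m x => ∑ k ∈ Finset.range m, g k x with hs
  have hsc : ∀ m, Continuous (s m) :=
    fun m => continuous_finset_sum _ fun k _ => (hgprop k).1
  have hsmono : ∀ {m n : ℕ}, m ≤ n → ∀ x, s m x ≤ s n x := by
    intro m n hmn x
    exact Finset.sum_le_sum_of_subset_of_nonneg (Finset.range_subset_range.mpr hmn)
      (fun k _ _ => (hgprop k).2.1 x)
  set U : ℕ → Set E := fun m => {x | (1:ℝ) < s m x} with hU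
  have hUopen : ∀ m, IsOpen (U m) := fun m => isOpen_lt continuous_const (hsc m)
  have hcover : K ⊆ ⋃ m, U m := by
    intro x _
    have hx := hdiv φ hφc hφcs hφ0 hφne x
    have hsum : (⨆ m, ∑ k ∈ Finset.range m, ENNReal.ofReal (g k x)) = ⊤ := by
      rw [← ENNReal.tsum_eq_iSup_nat]
      calc ∑' k : ℕ, ENNReal.ofReal (g k x)
          = ∑' k : ℕ, (mop κ)^[k] (fun y => ENNReal.ofReal (φ y)) x := by
            congr 1; ext k; rw [hiter k]
        _ = ⊤ := hx
    have h1lt : (1:ℝ≥0∞) < ⨆ m, ∑ k ∈ Finset.range m, ENNReal.ofReal (g k x) := by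
      rw [hsum]; exact ENNReal.one_lt_top
    obtain ⟨m, hm⟩ := lt_iSup_iff.mp h1lt
    have hofReal : ∑ k ∈ Finset.range m, ENNReal.ofReal (g k x)
        = ENNReal.ofReal (s m x) :=
      (ENNReal.ofReal_sum_of_nonneg fun k _ => (hgprop k).2.1 x).symm
    rw [hofReal] at hm
    have : (1:ℝ) < s m x := by
      by_contra hle
      push_neg at hle
      have : ENNReal.ofReal (s m x) ≤ 1 := by
        calc ENNReal.ofReal (s m x) ≤ ENNReal.ofReal 1 := ENNReal.ofReal_le_ofReal hle
        _ = 1 := ENNReal.ofReal_one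
      exact absurd hm (not_lt.mpr this)
    exact Set.mem_iUnion.mpr ⟨m, this⟩
  have hdir : Directed (· ⊆ ·) U := by
    intro m n
    refine ⟨max m n, fun x hx => ?_, fun x hx => ?_⟩
    · exact lt_of_lt_of_le hx (hsmono (le_max_left m n) x)
    · exact lt_of_lt_of_le hx (hsmono (le_max_right m n) x)
  obtain ⟨N, hN⟩ := hKc.elim_directed_cover U hUopen hcover hdir
  -- derive the contradiction
  have hsmeas : Measurable fun x => ENNReal.ofReal (s N x) :=
    (hsc N).measurable.ennreal_ofReal
  have hsN0 : ∫⁻ x, ENNReal.ofReal (s N x) ∂ν = 0 := by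
    have : (fun x => ENNReal.ofReal (s N x))
        = fun x => ∑ k ∈ Finset.range N, ENNReal.ofReal (g k x) := by
      ext x; exact ENNReal.ofReal_sum_of_nonneg fun k _ => (hgprop k).2.1 x
    rw [this, lintegral_finset_sum _ (fun k _ => ((hgprop k).1).measurable.ennreal_ofReal)]
    simp [hIk]
  have hKle : ν K ≤ ∫⁻ x, ENNReal.ofReal (s N x) ∂ν := by
    calc ν K = ∫⁻ _ in K, 1 ∂ν := (setLIntegral_one K).symm
      _ ≤ ∫⁻ x in K, ENNReal.ofReal (s N x) ∂ν := by
          apply setLIntegral_mono hsmeas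
          intro x hx
          have : (1:ℝ) ≤ s N x := le_of_lt (hN hx)
          exact ENNReal.one_le_ofReal.mpr this
      _ ≤ ∫⁻ x, ENNReal.ofReal (s N x) ∂ν := setLIntegral_le_lintegral K _
  rw [hsN0] at hKle
  exact absurd hKle (not_le.mpr hK)
end

section
/- Let G be a connected real Lie group in which every contraction subgroup C_g (g ∈ G) is trivial for the adjoint action, i.e., C_{Ad(g)} = {e} in GL(𝔤) for all g. Then for every g ∈ G, all eigenvalues of Ad(g) have absolute value 1 (G is of type R). -/
open Filter Topology Matrix

variable {L : Type*} [LieRing L] [LieAlgebra ℝ L] {d : ℕ} (b : Module.Basis (Fin d) ℝ L)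

/-- The group `Int(𝔤) = Ad(G)` of inner automorphisms of the Lie algebra `𝔤 = L` of a
connected Lie group, written in a basis `b` of `𝔤`: the subgroup of `GL(𝔤)`
generated by the exponentials `exp(ad X)`, `X ∈ 𝔤`. -/
noncomputable def adjointGroup : Subgroup (GL (Fin d) ℝ) :=
  Subgroup.closure {u : GL (Fin d) ℝ | ∃ X : L,
    (u : Matrix (Fin d) (Fin d) ℝ) =
      NormedSpace.exp (LinearMap.toMatrix b b (LieAlgebra.ad ℝ L X))}

lemma aux_exists_eigenvector (A : Matrix (Fin d) (Fin d) ℂ) {μ : ℂ} (h : μ ∈ spectrum ℂ A) :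
    ∃ v : Fin d → ℂ, v ≠ 0 ∧ A *ᵥ v = μ • v := by
  rw [← AlgEquiv.spectrum_eq (Matrix.toLinAlgEquiv' (R := ℂ) (n := Fin d))] at h
  have := Module.End.hasEigenvalue_iff_mem_spectrum.mpr h
  obtain ⟨v, hv⟩ := this.exists_hasEigenvector
  refine ⟨v, hv.2, ?_⟩
  have := hv.1
  rw [Module.End.mem_eigenspace_iff] at this
  simpa [Matrix.toLinAlgEquiv'_apply] using this

lemma aux_spectrum_transpose (A : Matrix (Fin d) (Fin d) ℂ) {μ : ℂ}
    (h : μ ∈ spectrum ℂ A) : μ ∈ spectrum ℂ Aᵀ := by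
  rw [spectrum.mem_iff] at h ⊢
  intro hU
  apply h
  have : (algebraMap ℂ (Matrix (Fin d) (Fin d) ℂ) μ - Aᵀ)ᵀ
      = algebraMap ℂ (Matrix (Fin d) (Fin d) ℂ) μ - A := by
    rw [Matrix.transpose_sub, Matrix.transpose_transpose]
    congr 1
    simp [Matrix.algebraMap_eq_diagonal, Matrix.diagonal_transpose]
  rw [Matrix.isUnit_iff_isUnit_det] at hU ⊢
  rw [← Matrix.det_transpose, this] at hU
  exact hU

lemma aux_tendsto_gl {f : ℕ → GL (Fin d) ℝ}
    (h : Tendsto (fun n => ((f n : GL (Fin d) ℝ) : Matrix (Fin d) (Fin d) ℝ)) atTop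
      (𝓝 (1 : Matrix (Fin d) (Fin d) ℝ))) :
    Tendsto f atTop (𝓝 1) := by
  rw [Units.isEmbedding_embedProduct.tendsto_nhds_iff]
  have hinv : Tendsto (fun n => (((f n)⁻¹ : GL (Fin d) ℝ) : Matrix (Fin d) (Fin d) ℝ)) atTop
      (𝓝 (1 : Matrix (Fin d) (Fin d) ℝ)) := by
    have hc : ContinuousAt Inv.inv (1 : Matrix (Fin d) (Fin d) ℝ) := by
      apply continuousAt_matrix_inv
      rw [Matrix.det_one]
      rw [Ring.inverse_eq_inv']
      exact continuousAt_inv₀ one_ne_zero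
    have := hc.tendsto.comp h
    simpa [Matrix.coe_units_inv, Function.comp_def] using this
  have key : Tendsto (fun n => Units.embedProduct _ (f n)) atTop
      (𝓝 (Units.embedProduct _ (1 : GL (Fin d) ℝ))) := by
    have h2 : Tendsto (fun n => MulOpposite.op (((f n)⁻¹ : GL (Fin d) ℝ) :
        Matrix (Fin d) (Fin d) ℝ)) atTop (𝓝 (MulOpposite.op (1 : Matrix (Fin d) (Fin d) ℝ))) :=
      (MulOpposite.continuous_op.tendsto _).comp hinv
    simp only [Units.embedProduct]
    exact Tendsto.prodMk_nhds h h2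
  exact key


/-- The Lie bracket transported to coordinates. -/
noncomputable def brkMap : (Fin d → ℝ) →ₗ[ℝ] (Fin d → ℝ) →ₗ[ℝ] (Fin d → ℝ) :=
  LinearMap.mk₂ ℝ (fun x y => b.equivFun ⁅b.equivFun.symm x, b.equivFun.symm y⁆)
    (by intro x x' y
        show b.equivFun ⁅b.equivFun.symm (x + x'), b.equivFun.symm y⁆ = _
        rw [b.equivFun.symm.map_add, add_lie, b.equivFun.map_add])
    (by intro c x y
        show b.equivFun ⁅b.equivFun.symm (c • x), b.equivFun.symm y⁆ = _
        rw [b.equivFun.symm.map_smul, smul_lie, b.equivFun.map_smul])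
    (by intro x y y'
        show b.equivFun ⁅b.equivFun.symm x, b.equivFun.symm (y + y')⁆ = _
        rw [b.equivFun.symm.map_add, lie_add, b.equivFun.map_add])
    (by intro c x y
        show b.equivFun ⁅b.equivFun.symm x, b.equivFun.symm (c • y)⁆ = _
        rw [b.equivFun.symm.map_smul, lie_smul, b.equivFun.map_smul])

lemma brkMap_repr (X Y : L) :
    brkMap b (b.equivFun X) (b.equivFun Y) = b.equivFun ⁅X, Y⁆ := by
  show b.equivFun ⁅b.equivFun.symm (b.equivFun X), b.equivFun.symm (b.equivFun Y)⁆ = _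
  rw [LinearEquiv.symm_apply_apply, LinearEquiv.symm_apply_apply]

lemma adMatrix_mulVec (X : L) (y : Fin d → ℝ) :
    (LinearMap.toMatrix b b (LieAlgebra.ad ℝ L X)) *ᵥ y = brkMap b (b.equivFun X) y := by
  have hy : y = b.equivFun (b.equivFun.symm y) := (b.equivFun.apply_symm_apply y).symm
  rw [hy]
  have h1 : ∀ Z : L, (LinearMap.toMatrix b b (LieAlgebra.ad ℝ L X)) *ᵥ (b.equivFun Z)
      = b.equivFun (⁅X, Z⁆) := by
    intro Z
    have := LinearMap.toMatrix_mulVec_repr b b (LieAlgebra.ad ℝ L X) Z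
    simpa [Module.Basis.equivFun_apply, LieAlgebra.ad_apply] using this
  rw [h1, brkMap_repr]

lemma adMatrix_derivation (X : L) (y z : Fin d → ℝ) :
    (LinearMap.toMatrix b b (LieAlgebra.ad ℝ L X)) *ᵥ (brkMap b y z)
      = brkMap b ((LinearMap.toMatrix b b (LieAlgebra.ad ℝ L X)) *ᵥ y) z
        + brkMap b y ((LinearMap.toMatrix b b (LieAlgebra.ad ℝ L X)) *ᵥ z) := by
  obtain ⟨Y, rfl⟩ : ∃ Y, b.equivFun Y = y := ⟨b.equivFun.symm y, b.equivFun.apply_symm_apply y⟩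
  obtain ⟨Z, rfl⟩ : ∃ Z, b.equivFun Z = z := ⟨b.equivFun.symm z, b.equivFun.apply_symm_apply z⟩
  simp only [adMatrix_mulVec, brkMap_repr, ← map_add]
  congr 1
  exact leibniz_lie X Y Z


lemma exp_derivation_aut (D : Matrix (Fin d) (Fin d) ℝ)
    (B : (Fin d → ℝ) →ₗ[ℝ] (Fin d → ℝ) →ₗ[ℝ] (Fin d → ℝ))
    (hD : ∀ y z, D *ᵥ (B y z) = B (D *ᵥ y) z + B y (D *ᵥ z)) (x y : Fin d → ℝ) :
    (NormedSpace.exp D) *ᵥ (B x y)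
      = B ((NormedSpace.exp D) *ᵥ x) ((NormedSpace.exp D) *ᵥ y) := by
  letI : SeminormedRing (Matrix (Fin d) (Fin d) ℝ) := Matrix.linftyOpSemiNormedRing
  letI : NormedRing (Matrix (Fin d) (Fin d) ℝ) := Matrix.linftyOpNormedRing
  letI : NormedAlgebra ℝ (Matrix (Fin d) (Fin d) ℝ) := Matrix.linftyOpNormedAlgebra
  set MV : Matrix (Fin d) (Fin d) ℝ →L[ℝ] ((Fin d → ℝ) →L[ℝ] (Fin d → ℝ)) :=
    LinearMap.toContinuousLinearMap
      ((LinearMap.toContinuousLinearMap :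
          ((Fin d → ℝ) →ₗ[ℝ] (Fin d → ℝ)) ≃ₗ[ℝ] ((Fin d → ℝ) →L[ℝ] (Fin d → ℝ))).toLinearMap
        ∘ₗ (Matrix.toLin' : Matrix (Fin d) (Fin d) ℝ ≃ₗ[ℝ] _).toLinearMap) with hMVdef
  set B2 : (Fin d → ℝ) →L[ℝ] ((Fin d → ℝ) →L[ℝ] (Fin d → ℝ)) :=
    LinearMap.toContinuousLinearMap
      ((LinearMap.toContinuousLinearMap :
          ((Fin d → ℝ) →ₗ[ℝ] (Fin d → ℝ)) ≃ₗ[ℝ] ((Fin d → ℝ) →L[ℝ] (Fin d → ℝ))).toLinearMap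
        ∘ₗ B) with hB2def
  have MV_apply : ∀ (A : Matrix (Fin d) (Fin d) ℝ) (v : Fin d → ℝ), MV A v = A *ᵥ v := by
    intro A v
    simp [hMVdef, Matrix.toLin'_apply]
  have B2_apply : ∀ (u v : Fin d → ℝ), B2 u v = B u v := fun u v => rfl
  set E : ℝ → Matrix (Fin d) (Fin d) ℝ := fun t => NormedSpace.exp (t • D) with hE
  set f : ℝ → (Fin d → ℝ) := fun t => MV (E (-t)) (B2 (MV (E t) x) (MV (E t) y)) with hf
  have hderiv : ∀ t : ℝ, HasDerivAt f 0 t := by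
    intro t
    have hEt : HasDerivAt E (E t * D) t := hasDerivAt_exp_smul_const D t
    have hEn : HasDerivAt (fun t : ℝ => E (-t)) ((-1 : ℝ) • (E (-t) * D)) t := by
      have h1 : HasDerivAt (fun s : ℝ => -s) (-1 : ℝ) t := (hasDerivAt_id t).neg
      exact (hasDerivAt_exp_smul_const D (-t)).scomp t h1
    have hMVt : HasDerivAt (fun t => MV (E t)) (MV (E t * D)) t :=
      MV.hasFDerivAt.comp_hasDerivAt t hEt
    have hMVn : HasDerivAt (fun t => MV (E (-t))) (MV ((-1 : ℝ) • (E (-t) * D))) t :=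
      MV.hasFDerivAt.comp_hasDerivAt t hEn
    have hx1 : HasDerivAt (fun t => MV (E t) x) (MV (E t * D) x) t := by
      simpa using hMVt.clm_apply (hasDerivAt_const t x)
    have hy1 : HasDerivAt (fun t => MV (E t) y) (MV (E t * D) y) t := by
      simpa using hMVt.clm_apply (hasDerivAt_const t y)
    have hBx : HasDerivAt (fun t => B2 (MV (E t) x)) (B2 (MV (E t * D) x)) t :=
      B2.hasFDerivAt.comp_hasDerivAt t hx1
    have hw : HasDerivAt (fun t => B2 (MV (E t) x) (MV (E t) y))
        (B2 (MV (E t * D) x) (MV (E t) y) + B2 (MV (E t) x) (MV (E t * D) y)) t :=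
      hBx.clm_apply hy1
    have hf0 := hMVn.clm_apply hw
    have hcomm : ∀ s : ℝ, E s * D = D * E s := fun s =>
      (((Commute.refl D).smul_left s).exp_left).eq
    have hzero : MV ((-1 : ℝ) • (E (-t) * D)) (B2 (MV (E t) x) (MV (E t) y))
        + MV (E (-t)) (B2 (MV (E t * D) x) (MV (E t) y) + B2 (MV (E t) x) (MV (E t * D) y))
        = 0 := by
      simp only [MV_apply, B2_apply, map_add]
      rw [hcomm t, hcomm (-t)]
      simp only [Matrix.smul_mulVec, ← Matrix.mulVec_mulVec]
      rw [← hD (E t *ᵥ x) (E t *ᵥ y)]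
      simp [hcomm (-t)]
    rw [hzero] at hf0
    exact hf0
  have hconst : f 1 = f 0 := by
    apply is_const_of_fderiv_eq_zero (𝕜 := ℝ) (fun t => (hderiv t).differentiableAt)
    intro t
    have := (hderiv t).hasFDerivAt.fderiv
    rw [this]
    ext z
    simp
  have hE0 : E 0 = 1 := by
    simp only [hE, zero_smul]
    exact NormedSpace.exp_zero
  have hf0val : f 0 = B x y := by
    simp only [hf]
    rw [neg_zero, hE0]
    simp only [MV_apply, B2_apply, Matrix.one_mulVec]
  have hE1 : E 1 = NormedSpace.exp D := by simp only [hE, one_smul]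
  have hmul : E 1 * E (-1) = 1 := by
    simp only [hE]
    rw [← Matrix.exp_add_of_commute _ _ (((Commute.refl D).smul_left (1 : ℝ)).smul_right (-1 : ℝ))]
    have h0 : (1 : ℝ) • D + (-1 : ℝ) • D = 0 := by
      simp
    rw [h0]
    exact NormedSpace.exp_zero
  have key : E (-1) *ᵥ (B (E 1 *ᵥ x)) (E 1 *ᵥ y) = (B x) y := by
    have h1 : f 1 = (B x) y := hconst.trans hf0val
    simp only [hf, MV_apply, B2_apply] at h1
    exact h1
  have key2 := congrArg (fun v => E 1 *ᵥ v) key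
  simp only [Matrix.mulVec_mulVec, hmul, Matrix.one_mulVec] at key2
  rw [← hE1]
  exact key2.symm


lemma adjoint_aut {g : GL (Fin d) ℝ} (hg : g ∈ adjointGroup b) (x y : Fin d → ℝ) :
    (↑g : Matrix (Fin d) (Fin d) ℝ) *ᵥ (brkMap b x y)
      = brkMap b ((↑g : Matrix (Fin d) (Fin d) ℝ) *ᵥ x)
          ((↑g : Matrix (Fin d) (Fin d) ℝ) *ᵥ y) := by
  revert x y
  have hg' : g ∈ Subgroup.closure {u : GL (Fin d) ℝ | ∃ X : L,
      (u : Matrix (Fin d) (Fin d) ℝ) =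
        NormedSpace.exp (LinearMap.toMatrix b b (LieAlgebra.ad ℝ L X))} := hg
  refine Subgroup.closure_induction
    (p := fun (w : GL (Fin d) ℝ) (_ : w ∈ Subgroup.closure _) =>
      ∀ x y : Fin d → ℝ, (↑w : Matrix (Fin d) (Fin d) ℝ) *ᵥ (brkMap b x y)
      = brkMap b ((↑w : Matrix (Fin d) (Fin d) ℝ) *ᵥ x) ((↑w : Matrix (Fin d) (Fin d) ℝ) *ᵥ y))
    ?_ ?_ ?_ ?_ hg'
  · rintro u ⟨X, hX⟩ x y
    rw [hX]
    exact exp_derivation_aut _ _ (adMatrix_derivation b X) x y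
  · intro x y
    simp [Matrix.one_mulVec]
  · intro u v _ _ pu pv x y
    rw [Units.val_mul, ← Matrix.mulVec_mulVec, pv, pu, Matrix.mulVec_mulVec,
      Matrix.mulVec_mulVec]
  · intro u _ pu x y
    have hcan : ∀ v : Fin d → ℝ, (↑u : Matrix (Fin d) (Fin d) ℝ) *ᵥ
        ((↑u⁻¹ : Matrix (Fin d) (Fin d) ℝ) *ᵥ v) = v := by
      intro v
      rw [Matrix.mulVec_mulVec, ← Units.val_mul, mul_inv_cancel, Units.val_one,
        Matrix.one_mulVec]
    have hcan' : ∀ v : Fin d → ℝ, (↑u⁻¹ : Matrix (Fin d) (Fin d) ℝ) *ᵥ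
        ((↑u : Matrix (Fin d) (Fin d) ℝ) *ᵥ v) = v := by
      intro v
      rw [Matrix.mulVec_mulVec, ← Units.val_mul, inv_mul_cancel, Units.val_one,
        Matrix.one_mulVec]
    conv_lhs => rw [← hcan x, ← hcan y]
    rw [← pu, hcan']

lemma adjoint_eq_one (hab : ∀ X Y : L, ⁅X, Y⁆ = 0) {g : GL (Fin d) ℝ}
    (hg : g ∈ adjointGroup b) : g = 1 := by
  have hle : adjointGroup b ≤ ⊥ := by
    rw [adjointGroup, Subgroup.closure_le]
    rintro u ⟨X, hX⟩
    have had : LieAlgebra.ad ℝ L X = 0 := by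
      ext Y
      simp [LieAlgebra.ad_apply, hab]
    rw [had, map_zero, NormedSpace.exp_zero] at hX
    have : u = 1 := Units.ext hX
    simp [this, Subgroup.mem_bot]
  exact Subgroup.mem_bot.mp (hle hg)

lemma aux_brk_zero (B : (Fin d → ℝ) →ₗ[ℝ] (Fin d → ℝ) →ₗ[ℝ] (Fin d → ℝ))
    (g : GL (Fin d) ℝ)
    (haut : ∀ n : ℕ, ∀ x y : Fin d → ℝ,
      ((g ^ n : GL (Fin d) ℝ) : Matrix (Fin d) (Fin d) ℝ) *ᵥ (B x y)
        = B (((g ^ n : GL (Fin d) ℝ) : Matrix (Fin d) (Fin d) ℝ) *ᵥ x)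
            (((g ^ n : GL (Fin d) ℝ) : Matrix (Fin d) (Fin d) ℝ) *ᵥ y))
    {c₁ c₂ : NNReal} (hc : (c₁ : ℝ) ^ 2 * (c₂ : ℝ) < 1)
    (h1 : spectralRadius ℂ (((g : Matrix (Fin d) (Fin d) ℝ)).map (algebraMap ℝ ℂ)) < c₁)
    (h2 : spectralRadius ℂ ((((g⁻¹ : GL (Fin d) ℝ) : Matrix (Fin d) (Fin d) ℝ)).map
      (algebraMap ℝ ℂ)) < c₂)
    (x y : Fin d → ℝ) : B x y = 0 := by
  letI : SeminormedRing (Matrix (Fin d) (Fin d) ℝ) := Matrix.linftyOpSemiNormedRing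
  letI : NormedRing (Matrix (Fin d) (Fin d) ℝ) := Matrix.linftyOpNormedRing
  letI : NormedAlgebra ℝ (Matrix (Fin d) (Fin d) ℝ) := Matrix.linftyOpNormedAlgebra
  letI : NormedRing (Matrix (Fin d) (Fin d) ℂ) := Matrix.linftyOpNormedRing
  letI : NormedAlgebra ℂ (Matrix (Fin d) (Fin d) ℂ) := Matrix.linftyOpNormedAlgebra
  letI : SeminormedAddCommGroup (Matrix (Fin d) (Fin d) ℝ →L[ℝ] ((Fin d → ℝ) →L[ℝ] (Fin d → ℝ))) :=
    ContinuousLinearMap.toSeminormedAddCommGroup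
  haveI : CompleteSpace (Matrix (Fin d) (Fin d) ℂ) := by infer_instance
  -- Gelfand
  have gel : ∀ (A : Matrix (Fin d) (Fin d) ℂ) (c : NNReal), spectralRadius ℂ A < c →
      ∀ᶠ n : ℕ in atTop, ‖A ^ n‖₊ ≤ c ^ n := by
    intro A c h
    have hG := spectrum.pow_nnnorm_pow_one_div_tendsto_nhds_spectralRadius A
    have hev : ∀ᶠ n : ℕ in atTop, ((‖A ^ n‖₊ : ENNReal) ^ (1 / (n : ℝ))) < (c : ENNReal) :=
      hG.eventually_lt_const (by exact_mod_cast h)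
    filter_upwards [hev, eventually_ge_atTop 1] with n hn hn1
    have hn0 : (n : ℝ) ≠ 0 := by positivity
    have h2' : ((‖A ^ n‖₊ : ENNReal) ^ (1 / (n : ℝ))) ^ (n : ℝ) ≤ (c : ENNReal) ^ (n : ℝ) :=
      ENNReal.rpow_le_rpow hn.le (by positivity)
    rw [← ENNReal.rpow_mul, one_div, inv_mul_cancel₀ hn0, ENNReal.rpow_one] at h2'
    rw [show ((n : ℝ)) = ((n : ℕ) : ℝ) from rfl, ENNReal.rpow_natCast, ← ENNReal.coe_pow] at h2'
    exact_mod_cast h2'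
  -- norm transfer real → complex
  have hmap : ∀ A : Matrix (Fin d) (Fin d) ℝ, ‖A.map (algebraMap ℝ ℂ)‖₊ = ‖A‖₊ := by
    intro A
    rw [Matrix.linfty_opNNNorm_def, Matrix.linfty_opNNNorm_def]
    congr 1
    funext i
    refine Finset.sum_congr rfl fun j _ => ?_
    simp only [Matrix.map_apply]
    refine NNReal.eq ?_
    simp [Complex.norm_real]
  have hpowmap : ∀ (A : Matrix (Fin d) (Fin d) ℝ) (n : ℕ),
      (A.map (algebraMap ℝ ℂ)) ^ n = (A ^ n).map (algebraMap ℝ ℂ) := by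
    intro A n
    have := map_pow ((algebraMap ℝ ℂ).mapMatrix) A n
    simpa [RingHom.mapMatrix_apply] using this.symm
  have ev1 : ∀ᶠ n : ℕ in atTop, ‖((g : Matrix (Fin d) (Fin d) ℝ)) ^ n‖₊ ≤ c₁ ^ n := by
    filter_upwards [gel _ _ h1] with n hn
    rwa [hpowmap, hmap] at hn
  have ev2 : ∀ᶠ n : ℕ in atTop,
      ‖(((g⁻¹ : GL (Fin d) ℝ) : Matrix (Fin d) (Fin d) ℝ)) ^ n‖₊ ≤ c₂ ^ n := by
    filter_upwards [gel _ _ h2] with n hn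
    rwa [hpowmap, hmap] at hn
  -- CLM machinery
  set MV : Matrix (Fin d) (Fin d) ℝ →L[ℝ] ((Fin d → ℝ) →L[ℝ] (Fin d → ℝ)) :=
    LinearMap.toContinuousLinearMap
      ((LinearMap.toContinuousLinearMap :
          ((Fin d → ℝ) →ₗ[ℝ] (Fin d → ℝ)) ≃ₗ[ℝ] ((Fin d → ℝ) →L[ℝ] (Fin d → ℝ))).toLinearMap
        ∘ₗ (Matrix.toLin' : Matrix (Fin d) (Fin d) ℝ ≃ₗ[ℝ] _).toLinearMap) with hMVdef
  set B2 : (Fin d → ℝ) →L[ℝ] ((Fin d → ℝ) →L[ℝ] (Fin d → ℝ)) :=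
    LinearMap.toContinuousLinearMap
      ((LinearMap.toContinuousLinearMap :
          ((Fin d → ℝ) →ₗ[ℝ] (Fin d → ℝ)) ≃ₗ[ℝ] ((Fin d → ℝ) →L[ℝ] (Fin d → ℝ))).toLinearMap
        ∘ₗ B) with hB2def
  have MV_apply : ∀ (A : Matrix (Fin d) (Fin d) ℝ) (v : Fin d → ℝ), MV A v = A *ᵥ v := by
    intro A v
    simp [hMVdef, Matrix.toLin'_apply]
  have B2_apply : ∀ (u v : Fin d → ℝ), B2 u v = B u v := fun u v => rfl
  set q : ℝ := (c₁ : ℝ) ^ 2 * (c₂ : ℝ) with hq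
  have hq0 : 0 ≤ q := by positivity
  set K : ℝ := ‖MV‖ * ‖B2‖ * ‖MV‖ * ‖MV‖ * ‖x‖ * ‖y‖ with hK
  have hbound : ∀ᶠ n : ℕ in atTop, ‖B x y‖ ≤ K * q ^ n := by
    filter_upwards [ev1, ev2] with n e1 e2
    set An : Matrix (Fin d) (Fin d) ℝ := ((g : Matrix (Fin d) (Fin d) ℝ)) ^ n with hAn
    set An' : Matrix (Fin d) (Fin d) ℝ
      := (((g⁻¹ : GL (Fin d) ℝ) : Matrix (Fin d) (Fin d) ℝ)) ^ n with hAn'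
    have e1' : ‖An‖ ≤ (c₁ : ℝ) ^ n := by exact_mod_cast e1
    have e2' : ‖An'‖ ≤ (c₂ : ℝ) ^ n := by exact_mod_cast e2
    have hcancel : An' * An = 1 := by
      rw [hAn, hAn', ← Units.val_pow_eq_pow_val, ← Units.val_pow_eq_pow_val, ← Units.val_mul,
        inv_pow, inv_mul_cancel, Units.val_one]
    have heq : B x y = MV An' (B2 (MV An x) (MV An y)) := by
      simp only [MV_apply, B2_apply]
      have h := haut n x y
      rw [Units.val_pow_eq_pow_val, ← hAn] at h
      rw [← h, Matrix.mulVec_mulVec, hcancel, Matrix.one_mulVec]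
    rw [heq]
    calc ‖MV An' (B2 (MV An x) (MV An y))‖
        ≤ ‖MV‖ * ‖An'‖ * ‖B2 (MV An x) (MV An y)‖ := ContinuousLinearMap.le_opNorm₂ MV _ _
      _ ≤ ‖MV‖ * ‖An'‖ * (‖B2‖ * (‖MV‖ * ‖An‖ * ‖x‖) * (‖MV‖ * ‖An‖ * ‖y‖)) := by
          have hB2b : ‖B2 (MV An x) (MV An y)‖
              ≤ ‖B2‖ * (‖MV‖ * ‖An‖ * ‖x‖) * (‖MV‖ * ‖An‖ * ‖y‖) := by
            calc ‖B2 (MV An x) (MV An y)‖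
              ≤ ‖B2‖ * ‖MV An x‖ * ‖MV An y‖ := ContinuousLinearMap.le_opNorm₂ B2 _ _
              _ ≤ ‖B2‖ * (‖MV‖ * ‖An‖ * ‖x‖) * (‖MV‖ * ‖An‖ * ‖y‖) := by
                  gcongr <;> exact ContinuousLinearMap.le_opNorm₂ MV _ _
          gcongr
      _ ≤ ‖MV‖ * (c₂ : ℝ) ^ n * (‖B2‖ * (‖MV‖ * (c₁ : ℝ) ^ n * ‖x‖)
            * (‖MV‖ * (c₁ : ℝ) ^ n * ‖y‖)) := by gcongr
      _ = K * q ^ n := by rw [hK, hq]; ring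
  have htend : Tendsto (fun n : ℕ => K * q ^ n) atTop (𝓝 0) := by
    simpa using (tendsto_pow_atTop_nhds_zero_of_lt_one hq0 hc).const_mul K
  have : ‖B x y‖ ≤ 0 := ge_of_tendsto htend hbound
  simpa using le_antisymm this (norm_nonneg _)

lemma aux_mul_vecMulVec (A : Matrix (Fin d) (Fin d) ℂ) (w z : Fin d → ℂ) :
    A * Matrix.vecMulVec w z = Matrix.vecMulVec (A *ᵥ w) z := by
  ext i j
  simp [Matrix.mul_apply, Matrix.vecMulVec_apply, Matrix.mulVec, dotProduct,
    Finset.sum_mul, mul_assoc]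

lemma aux_vecMulVec_mul (A : Matrix (Fin d) (Fin d) ℂ) (w z : Fin d → ℂ) :
    Matrix.vecMulVec w z * A = Matrix.vecMulVec w (Aᵀ *ᵥ z) := by
  ext i j
  simp [Matrix.mul_apply, Matrix.vecMulVec_apply, Matrix.mulVec, dotProduct,
    Finset.mul_sum, Matrix.transpose_apply]
  congr 1
  funext k
  ring

lemma aux_map_re (A B : Matrix (Fin d) (Fin d) ℝ) (C : Matrix (Fin d) (Fin d) ℂ)
    (f : ℂ →ₗ[ℝ] ℝ) (hf : ∀ (a b : ℝ) (z : ℂ), f ((a : ℂ) * z * (b : ℂ)) = a * f z * b) :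
    (A.map (algebraMap ℝ ℂ) * C * B.map (algebraMap ℝ ℂ)).map f = A * C.map f * B := by
  ext i j
  simp only [Matrix.map_apply, Matrix.mul_apply, Matrix.map_apply]
  rw [show ∀ (g : Fin d → ℂ), f (∑ k, g k) = ∑ k, f (g k) from fun g => map_sum f g Finset.univ]
  refine Finset.sum_congr rfl fun k _ => ?_
  rw [Finset.sum_mul, Finset.sum_mul, map_sum f]
  rw [show ∀ (g : Fin d → ℝ), (∑ l, g l) = ∑ l, g l from fun _ => rfl]
  refine Finset.sum_congr rfl fun l _ => ?_
  have := hf (A i l) (B k j) (C l k)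
  simpa [mul_comm, mul_assoc, mul_left_comm] using this

lemma aux_contraction {g : GL (Fin d) ℝ} {lam kap : ℂ}
    (hlam : lam ∈ spectrum ℂ (((g : GL (Fin d) ℝ) : Matrix (Fin d) (Fin d) ℝ).map
      (algebraMap ℝ ℂ)))
    (hkap : kap ∈ spectrum ℂ (((g : GL (Fin d) ℝ) : Matrix (Fin d) (Fin d) ℝ).map
      (algebraMap ℝ ℂ)))
    (hlt : ‖lam‖ < ‖kap‖) :
    ∃ v : GL (Fin d) ℝ, v ≠ 1 ∧ Tendsto (fun n : ℕ => g ^ n * v * (g ^ n)⁻¹) atTop (𝓝 1) := by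
  set M : Matrix (Fin d) (Fin d) ℝ := (g : Matrix (Fin d) (Fin d) ℝ) with hM
  set M' : Matrix (Fin d) (Fin d) ℝ := ((g⁻¹ : GL (Fin d) ℝ) : Matrix (Fin d) (Fin d) ℝ) with hM'
  set Mc := M.map (algebraMap ℝ ℂ) with hMc
  set Mc' := M'.map (algebraMap ℝ ℂ) with hMc'
  have hkap0 : kap ≠ 0 := by
    intro h
    rw [h, norm_zero] at hlt
    exact (norm_nonneg lam).not_gt hlt
  obtain ⟨v, hv0, hveig⟩ := aux_exists_eigenvector Mc hlam
  obtain ⟨u, hu0, hueig⟩ := aux_exists_eigenvector Mcᵀ (aux_spectrum_transpose Mc hkap)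
  have hMM' : Mc * Mc' = 1 := by
    rw [hMc, hMc', ← RingHom.mapMatrix_apply, ← RingHom.mapMatrix_apply, ← _root_.map_mul]
    rw [hM, hM', ← Units.val_mul, mul_inv_cancel, Units.val_one, _root_.map_one]
  have hM'M : Mc' * Mc = 1 := by
    rw [hMc, hMc', ← RingHom.mapMatrix_apply, ← RingHom.mapMatrix_apply, ← _root_.map_mul]
    rw [hM, hM', ← Units.val_mul, inv_mul_cancel, Units.val_one, _root_.map_one]
  have hueig' : Mc'ᵀ *ᵥ u = kap⁻¹ • u := by
    have h1 : Mc'ᵀ * Mcᵀ = 1 := by rw [← Matrix.transpose_mul, hMM', Matrix.transpose_one]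
    have h2 : Mc'ᵀ *ᵥ (Mcᵀ *ᵥ u) = u := by rw [Matrix.mulVec_mulVec, h1, Matrix.one_mulVec]
    rw [hueig, Matrix.mulVec_smul] at h2
    have h3 := congrArg (fun w : Fin d → ℂ => kap⁻¹ • w) h2
    simp only [smul_smul, inv_mul_cancel₀ hkap0, one_smul] at h3
    exact h3
  set c : ℂ := lam * kap⁻¹ with hc
  have hcnorm : ‖c‖ < 1 := by
    rw [hc]
    have h2 : (0:ℝ) < ‖kap‖ := lt_of_le_of_lt (by positivity) hlt
    rw [norm_mul, norm_inv, ← div_eq_mul_inv, div_lt_one h2]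
    exact hlt
  set N := Matrix.vecMulVec v u with hN
  have hstep : Mc * N * Mc' = c • N := by
    rw [hN, aux_mul_vecMulVec, hveig, aux_vecMulVec_mul, hueig']
    ext i j
    simp only [Matrix.vecMulVec_apply, Matrix.smul_apply, Pi.smul_apply, smul_eq_mul, hc]
    ring
  have hconj : ∀ n : ℕ, Mc ^ n * N * Mc' ^ n = (c ^ n) • N := by
    intro n
    induction n with
    | zero => simp
    | succ n ih =>
      rw [pow_succ Mc n, pow_succ' Mc' n]
      calc Mc ^ n * Mc * N * (Mc' * Mc' ^ n) = Mc ^ n * (Mc * N * Mc') * Mc' ^ n := by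
            noncomm_ring
        _ = Mc ^ n * (c • N) * Mc' ^ n := by rw [hstep]
        _ = c • (Mc ^ n * N * Mc' ^ n) := by
            rw [Matrix.mul_smul, Matrix.smul_mul]
        _ = c • (c ^ n • N) := by rw [ih]
        _ = c ^ (n + 1) • N := by rw [smul_smul, ← pow_succ']
  obtain ⟨i0, hi0⟩ := Function.ne_iff.mp hv0
  obtain ⟨j0, hj0⟩ := Function.ne_iff.mp hu0
  have hNij : N i0 j0 ≠ 0 := by
    rw [hN]
    simp only [Matrix.vecMulVec_apply]
    exact mul_ne_zero hi0 hj0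
  obtain ⟨f, hf, hfij⟩ : ∃ f : ℂ →ₗ[ℝ] ℝ,
      (∀ (a b : ℝ) (z : ℂ), f ((a : ℂ) * z * (b : ℂ)) = a * f z * b) ∧ f (N i0 j0) ≠ 0 := by
    by_cases hre : (N i0 j0).re ≠ 0
    · exact ⟨Complex.reLm, by intro a b z; simp [Complex.mul_re, Complex.mul_im]; try ring, hre⟩
    · refine ⟨Complex.imLm, by intro a b z; simp [Complex.mul_re, Complex.mul_im]; try ring, ?_⟩
      simp only [Complex.imLm_coe]
      intro him
      push_neg at hre
      exact hNij (Complex.ext hre him)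
  set P := N.map f with hP
  have hPne : P ≠ 0 := by
    intro h
    apply hfij
    have := congrFun (congrFun h i0) j0
    simpa [hP, Matrix.map_apply] using this
  have hpowmap : ∀ (A : Matrix (Fin d) (Fin d) ℝ) (n : ℕ),
      (A.map (algebraMap ℝ ℂ)) ^ n = (A ^ n).map (algebraMap ℝ ℂ) := by
    intro A n
    have := map_pow ((algebraMap ℝ ℂ).mapMatrix) A n
    simpa [RingHom.mapMatrix_apply] using this.symm
  have hkey : ∀ n : ℕ, M ^ n * P * M' ^ n = ((c ^ n) • N).map f := by
    intro n
    have h1 := aux_map_re (M ^ n) (M' ^ n) N f hf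
    rw [← hpowmap, ← hpowmap, ← hMc, ← hMc', hconj n] at h1
    rw [hP, ← h1]
  have htend0 : Tendsto (fun n : ℕ => M ^ n * P * M' ^ n) atTop
      (𝓝 (0 : Matrix (Fin d) (Fin d) ℝ)) := by
    refine tendsto_pi_nhds.mpr ?_
    intro a
    rw [tendsto_pi_nhds]
    intro e
    have hcentry : Tendsto (fun n : ℕ => c ^ n * N a e) atTop (𝓝 0) := by
      simpa using (tendsto_pow_atTop_nhds_zero_of_norm_lt_one hcnorm).mul_const (N a e)
    have hfc : Continuous f := f.continuous_of_finiteDimensional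
    have h3 : Tendsto (fun n : ℕ => f (c ^ n * N a e)) atTop (𝓝 (f 0)) :=
      (hfc.tendsto 0).comp hcentry
    rw [map_zero] at h3
    have h4 : ∀ n : ℕ, (M ^ n * P * M' ^ n) a e = f (c ^ n * N a e) := by
      intro n
      rw [hkey n]
      simp [Matrix.map_apply, Matrix.smul_apply, smul_eq_mul]
    simp only [h4]
    simpa using h3
  have hdet : Tendsto (fun t : ℝ => (1 + t • P).det) (𝓝 0) (𝓝 1) := by
    have hcont : Continuous fun t : ℝ => (1 + t • P).det :=
      (continuous_const.add (continuous_id.smul continuous_const)).matrix_det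
    have := hcont.tendsto 0
    simpa using this
  have hev : ∀ᶠ t : ℝ in 𝓝 0, (1 + t • P).det ≠ 0 := hdet.eventually_ne one_ne_zero
  obtain ⟨t, hdet_t, ht0⟩ : ∃ t : ℝ, (1 + t • P).det ≠ 0 ∧ t ≠ 0 := by
    have h5 : ∀ᶠ t in 𝓝[≠] (0 : ℝ), (1 + t • P).det ≠ 0 ∧ t ≠ 0 :=
      (hev.filter_mono nhdsWithin_le_nhds).and
        (eventually_mem_nhdsWithin.mono fun x hx => hx)
    exact h5.exists
  have hunit : IsUnit (1 + t • P) := (Matrix.isUnit_iff_isUnit_det _).mpr hdet_t.isUnit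
  refine ⟨hunit.unit, ?_, ?_⟩
  · intro h
    have h1 : ((hunit.unit : GL (Fin d) ℝ) : Matrix (Fin d) (Fin d) ℝ)
        = (1 : Matrix (Fin d) (Fin d) ℝ) := by rw [h]; rfl
    rw [IsUnit.unit_spec] at h1
    rw [add_eq_left] at h1
    rcases smul_eq_zero.mp h1 with h' | h'
    · exact ht0 h'
    · exact hPne h'
  · apply aux_tendsto_gl
    have hval : ∀ n : ℕ, (((g ^ n * hunit.unit * (g ^ n)⁻¹ : GL (Fin d) ℝ)) :
        Matrix (Fin d) (Fin d) ℝ) = 1 + t • (M ^ n * P * M' ^ n) := by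
      intro n
      have hMn : ((g ^ n : GL (Fin d) ℝ) : Matrix (Fin d) (Fin d) ℝ) = M ^ n := by
        rw [Units.val_pow_eq_pow_val, hM]
      have hMn' : (((g ^ n)⁻¹ : GL (Fin d) ℝ) : Matrix (Fin d) (Fin d) ℝ) = M' ^ n := by
        rw [← inv_pow, Units.val_pow_eq_pow_val, hM']
      rw [Units.val_mul, Units.val_mul, hMn, hMn', IsUnit.unit_spec]
      have hone : M ^ n * M' ^ n = 1 := by
        rw [hM, hM', ← Units.val_pow_eq_pow_val, ← Units.val_pow_eq_pow_val, ← Units.val_mul,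
          inv_pow, mul_inv_cancel, Units.val_one]
      calc M ^ n * (1 + t • P) * M' ^ n
          = M ^ n * M' ^ n + t • (M ^ n * P * M' ^ n) := by
            rw [mul_add, add_mul, mul_one, Matrix.mul_smul, Matrix.smul_mul]
        _ = 1 + t • (M ^ n * P * M' ^ n) := by rw [hone]
    simp only [hval]
    have hfin : Tendsto (fun n : ℕ => 1 + t • (M ^ n * P * M' ^ n)) atTop
        (𝓝 (1 + t • (0 : Matrix (Fin d) (Fin d) ℝ))) :=
      tendsto_const_nhds.add (htend0.const_smul t)
    simpa using hfin

/-- Let `G` be a connected real Lie group (encoded through its adjoint image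
`Ad(G) = Int(𝔤) ⊆ GL(𝔤)`, `𝔤` its finite-dimensional Lie algebra) such that for every
`g` the contraction subgroup of `Ad(g)` in `GL(𝔤)` is trivial. Then all (complex)
eigenvalues of every `Ad(g)` have absolute value `1`, i.e. `G` is of type R. -/
theorem stmt17
    (hcontr : ∀ g ∈ adjointGroup b, ∀ v : GL (Fin d) ℝ,
      Tendsto (fun n : ℕ => g ^ n * v * (g ^ n)⁻¹) atTop (nhds 1) → v = 1) :
    ∀ g ∈ adjointGroup b, ∀ μ : ℂ,
      μ ∈ spectrum ℂ (((g : GL (Fin d) ℝ) : Matrix (Fin d) (Fin d) ℝ).map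
        (algebraMap ℝ ℂ)) →
      ‖μ‖ = 1 := by
  -- Step 1: no eigenvalue has modulus < 1.
  have key : ∀ g ∈ adjointGroup b, ∀ μ : ℂ,
      μ ∈ spectrum ℂ (((g : GL (Fin d) ℝ) : Matrix (Fin d) (Fin d) ℝ).map
        (algebraMap ℝ ℂ)) → 1 ≤ ‖μ‖ := by
    intro g hg μ hμ
    by_contra hlt1
    push_neg at hlt1
    by_cases hpair : ∃ l ∈ spectrum ℂ (((g : GL (Fin d) ℝ) : Matrix (Fin d) (Fin d) ℝ).map
        (algebraMap ℝ ℂ)), ∃ k ∈ spectrum ℂ (((g : GL (Fin d) ℝ) :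
          Matrix (Fin d) (Fin d) ℝ).map (algebraMap ℝ ℂ)), ‖l‖ < ‖k‖
    · obtain ⟨l, hl, k, hk, hlk⟩ := hpair
      obtain ⟨v, hv1, htd⟩ := aux_contraction hl hk hlk
      exact hv1 (hcontr g hg v htd)
    · push_neg at hpair
      have hall : ∀ l ∈ spectrum ℂ (((g : GL (Fin d) ℝ) : Matrix (Fin d) (Fin d) ℝ).map
          (algebraMap ℝ ℂ)), ‖l‖ = ‖μ‖ := fun l hl =>
        le_antisymm (hpair μ hμ l hl) (hpair l hl μ hμ)
      set gu : (Matrix (Fin d) (Fin d) ℂ)ˣ :=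
        Units.map ((algebraMap ℝ ℂ).mapMatrix.toMonoidHom) g with hgu
      have hguval : (gu : Matrix (Fin d) (Fin d) ℂ)
          = ((g : GL (Fin d) ℝ) : Matrix (Fin d) (Fin d) ℝ).map (algebraMap ℝ ℂ) := rfl
      have hmulgu : (gu * Units.map ((algebraMap ℝ ℂ).mapMatrix.toMonoidHom) g⁻¹ :
          (Matrix (Fin d) (Fin d) ℂ)ˣ) = 1 := by
        apply Units.ext
        rw [Units.val_mul, Units.val_one]
        show ((g : GL (Fin d) ℝ) : Matrix (Fin d) (Fin d) ℝ).map (algebraMap ℝ ℂ) *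
          ((g⁻¹ : GL (Fin d) ℝ) : Matrix (Fin d) (Fin d) ℝ).map (algebraMap ℝ ℂ) = 1
        rw [← RingHom.mapMatrix_apply, ← RingHom.mapMatrix_apply, ← _root_.map_mul,
          ← Units.val_mul, mul_inv_cancel, Units.val_one, _root_.map_one]
      have hgueq : (Units.map ((algebraMap ℝ ℂ).mapMatrix.toMonoidHom) g⁻¹ :
          (Matrix (Fin d) (Fin d) ℂ)ˣ) = gu⁻¹ := eq_inv_of_mul_eq_one_right hmulgu
      have hguinv : ((gu⁻¹ : (Matrix (Fin d) (Fin d) ℂ)ˣ) : Matrix (Fin d) (Fin d) ℂ)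
          = ((g⁻¹ : GL (Fin d) ℝ) : Matrix (Fin d) (Fin d) ℝ).map (algebraMap ℝ ℂ) := by
        rw [← hgueq]
        rfl
      have hmu0 : μ ≠ 0 := by
        intro h
        have h0 : (0 : ℂ) ∉ spectrum ℂ ((gu : Matrix (Fin d) (Fin d) ℂ)) :=
          spectrum.zero_notMem_iff ℂ |>.mpr gu.isUnit
        rw [hguval] at h0
        exact h0 (h ▸ hμ)
      set ρ : NNReal := ‖μ‖₊ with hρ
      have hρa : (ρ : ℝ) = ‖μ‖ := by
        rw [hρ, coe_nnnorm]
      have hρ0 : 0 < ρ := by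
        rw [← NNReal.coe_lt_coe, hρa]
        exact norm_pos_iff.mpr hmu0
      have hρ1 : ρ < 1 := by
        rw [← NNReal.coe_lt_coe, hρa]
        exact hlt1
      have hnn : ∀ k : ℂ, ‖k‖ = ‖μ‖ → ‖k‖₊ = ρ := by
        intro k hk
        rw [hρ]
        ext
        rw [coe_nnnorm, coe_nnnorm, hk]
      have sr1 : spectralRadius ℂ ((gu : Matrix (Fin d) (Fin d) ℂ)) ≤ (ρ : ENNReal) := by
        apply iSup₂_le
        intro k hk
        rw [hguval] at hk
        rw [hnn k (hall k hk)]
      have sr2 : spectralRadius ℂ (((gu⁻¹ : (Matrix (Fin d) (Fin d) ℂ)ˣ) :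
          Matrix (Fin d) (Fin d) ℂ)) ≤ ((ρ⁻¹ : NNReal) : ENNReal) := by
        apply iSup₂_le
        intro ν hν
        have hν0 : ν ≠ 0 := by
          intro h
          have h0 : (0 : ℂ) ∉ spectrum ℂ (((gu⁻¹ : (Matrix (Fin d) (Fin d) ℂ)ˣ) :
              Matrix (Fin d) (Fin d) ℂ)) := spectrum.zero_notMem_iff ℂ |>.mpr (gu⁻¹).isUnit
          exact h0 (h ▸ hν)
        have hinv : ν⁻¹ ∈ spectrum ℂ ((gu : Matrix (Fin d) (Fin d) ℂ)) := by
          have h1 := (spectrum.inv_mem_iff (r := Units.mk0 ν hν0) (a := gu⁻¹)).mp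
          simp only [inv_inv, Units.val_mk0, Units.val_inv_eq_inv_val] at h1 ⊢
          exact h1 hν
        rw [hguval] at hinv
        have habs : ‖ν⁻¹‖ = ‖μ‖ := hall _ hinv
        have : ‖ν‖₊ = ρ⁻¹ := by
          have h2 : ‖ν⁻¹‖₊ = ρ := hnn _ habs
          rw [nnnorm_inv] at h2
          rw [← h2, inv_inv]
        rw [this]
      -- choose the exponent gap
      set c₁ : NNReal := ρ ^ ((3 : ℝ) / 4) with hc₁
      set c₂ : NNReal := ρ ^ (-(9 : ℝ) / 8) with hc₂
      have hρc₁ : ρ < c₁ := by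
        rw [hc₁]
        calc ρ = ρ ^ (1 : ℝ) := (NNReal.rpow_one ρ).symm
          _ < ρ ^ ((3 : ℝ) / 4) := NNReal.rpow_lt_rpow_of_exponent_gt hρ0 hρ1 (by norm_num)
      have hρc₂ : ρ⁻¹ < c₂ := by
        rw [hc₂]
        calc ρ⁻¹ = ρ ^ (-1 : ℝ) := by rw [NNReal.rpow_neg_one]
          _ < ρ ^ (-(9 : ℝ) / 8) := NNReal.rpow_lt_rpow_of_exponent_gt hρ0 hρ1 (by norm_num)
      have hq : c₁ ^ (2 : ℕ) * c₂ < 1 := by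
        rw [hc₁, hc₂, ← NNReal.rpow_natCast (ρ ^ ((3 : ℝ) / 4)) 2, ← NNReal.rpow_mul,
          ← NNReal.rpow_add (ne_of_gt hρ0)]
        norm_num
        calc ρ ^ ((3 : ℝ) / 8) < ρ ^ (0 : ℝ) :=
              NNReal.rpow_lt_rpow_of_exponent_gt hρ0 hρ1 (by norm_num)
          _ = 1 := NNReal.rpow_zero ρ
      have hqreal : ((c₁ : ℝ)) ^ 2 * (c₂ : ℝ) < 1 := by
        have := hq
        rw [← NNReal.coe_lt_coe] at this
        push_cast at this
        exact this
      have h1' : spectralRadius ℂ (((g : GL (Fin d) ℝ) : Matrix (Fin d) (Fin d) ℝ).map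
          (algebraMap ℝ ℂ)) < (c₁ : ENNReal) := by
        rw [← hguval]
        exact lt_of_le_of_lt sr1 (ENNReal.coe_lt_coe.mpr hρc₁)
      have h2' : spectralRadius ℂ (((g⁻¹ : GL (Fin d) ℝ) : Matrix (Fin d) (Fin d) ℝ).map
          (algebraMap ℝ ℂ)) < (c₂ : ENNReal) := by
        rw [← hguinv]
        exact lt_of_le_of_lt sr2 (ENNReal.coe_lt_coe.mpr hρc₂)
      have haut : ∀ n : ℕ, ∀ x y : Fin d → ℝ,
          ((g ^ n : GL (Fin d) ℝ) : Matrix (Fin d) (Fin d) ℝ) *ᵥ (brkMap b x y)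
            = brkMap b (((g ^ n : GL (Fin d) ℝ) : Matrix (Fin d) (Fin d) ℝ) *ᵥ x)
                (((g ^ n : GL (Fin d) ℝ) : Matrix (Fin d) (Fin d) ℝ) *ᵥ y) :=
        fun n x y => adjoint_aut b (pow_mem hg n) x y
      have hBzero := aux_brk_zero (brkMap b) g haut hqreal h1' h2'
      have hab : ∀ X Y : L, ⁅X, Y⁆ = 0 := by
        intro X Y
        have h3 := hBzero (b.equivFun X) (b.equivFun Y)
        rw [brkMap_repr] at h3
        exact b.equivFun.map_eq_zero_iff.mp h3
      have hg1 : g = 1 := adjoint_eq_one b hab hg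
      rw [hg1] at hμ
      have hone : (((1 : GL (Fin d) ℝ) : Matrix (Fin d) (Fin d) ℝ)).map (algebraMap ℝ ℂ)
          = (1 : Matrix (Fin d) (Fin d) ℂ) := by
        rw [Units.val_one, Matrix.map_one _ (_root_.map_zero _) (_root_.map_one _)]
      rw [hone] at hμ
      have hμ1 : μ = 1 := by
        by_contra hne
        rw [spectrum.mem_iff] at hμ
        apply hμ
        have h4 : algebraMap ℂ (Matrix (Fin d) (Fin d) ℂ) μ - 1
            = algebraMap ℂ (Matrix (Fin d) (Fin d) ℂ) (μ - 1) := by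
          rw [map_sub, _root_.map_one]
        rw [h4]
        exact (Ne.isUnit (sub_ne_zero.mpr hne)).map (algebraMap ℂ (Matrix (Fin d) (Fin d) ℂ))
      rw [hμ1] at hlt1
      simp at hlt1
  -- Step 2: apply to g and g⁻¹.
  intro g hg μ hμ
  have hge : 1 ≤ ‖μ‖ := key g hg μ hμ
  have hmu0 : μ ≠ 0 := by
    intro h
    rw [h] at hge
    simp at hge
    exact absurd hge (by norm_num)
  set gu : (Matrix (Fin d) (Fin d) ℂ)ˣ :=
    Units.map ((algebraMap ℝ ℂ).mapMatrix.toMonoidHom) g with hgu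
  have hguval : (gu : Matrix (Fin d) (Fin d) ℂ)
      = ((g : GL (Fin d) ℝ) : Matrix (Fin d) (Fin d) ℝ).map (algebraMap ℝ ℂ) := rfl
  have hmulgu : (gu * Units.map ((algebraMap ℝ ℂ).mapMatrix.toMonoidHom) g⁻¹ :
      (Matrix (Fin d) (Fin d) ℂ)ˣ) = 1 := by
    apply Units.ext
    rw [Units.val_mul, Units.val_one]
    show ((g : GL (Fin d) ℝ) : Matrix (Fin d) (Fin d) ℝ).map (algebraMap ℝ ℂ) *
      ((g⁻¹ : GL (Fin d) ℝ) : Matrix (Fin d) (Fin d) ℝ).map (algebraMap ℝ ℂ) = 1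
    rw [← RingHom.mapMatrix_apply, ← RingHom.mapMatrix_apply, ← _root_.map_mul,
      ← Units.val_mul, mul_inv_cancel, Units.val_one, _root_.map_one]
  have hgueq : (Units.map ((algebraMap ℝ ℂ).mapMatrix.toMonoidHom) g⁻¹ :
      (Matrix (Fin d) (Fin d) ℂ)ˣ) = gu⁻¹ := eq_inv_of_mul_eq_one_right hmulgu
  have hguinv : ((gu⁻¹ : (Matrix (Fin d) (Fin d) ℂ)ˣ) : Matrix (Fin d) (Fin d) ℂ)
      = ((g⁻¹ : GL (Fin d) ℝ) : Matrix (Fin d) (Fin d) ℝ).map (algebraMap ℝ ℂ) := by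
    rw [← hgueq]
    rfl
  have hinvspec : μ⁻¹ ∈ spectrum ℂ (((g⁻¹ : GL (Fin d) ℝ) :
      Matrix (Fin d) (Fin d) ℝ).map (algebraMap ℝ ℂ)) := by
    rw [← hguinv]
    have h1 := (spectrum.inv_mem_iff (r := Units.mk0 μ hmu0) (a := gu)).mp
    simp only [Units.val_mk0, Units.val_inv_eq_inv_val] at h1
    rw [hguval] at h1
    exact h1 hμ
  have hge2 : 1 ≤ ‖μ⁻¹‖ := key g⁻¹ ((adjointGroup b).inv_mem hg) μ⁻¹ hinvspec
  rw [norm_inv] at hge2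
  have hpos : 0 < ‖μ‖ := lt_of_lt_of_le one_pos hge
  have hle : ‖μ‖ ≤ 1 := by
    have h3 : ‖μ‖ * 1 ≤ ‖μ‖ * ‖μ‖⁻¹ :=
      mul_le_mul_of_nonneg_left hge2 hpos.le
    rwa [mul_one, mul_inv_cancel₀ (ne_of_gt hpos)] at h3
  exact le_antisymm hle hge
end
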